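/- Let H be a weak Hopf algebra over a field k. Then for Π ∈ {Π_L, Π_R, \overline{Π}_L, \overline{Π}_R} the following mixed associativity-type identities hold (these are automatic here by associativity, so state instead the weak Hopf quasigroup content): in any weak Hopf quasigroup H over k (a unital magma and comonoid satisfying axioms (a1)–(a4)), the identities μ∘((μ∘(Π⊗id))⊗id) = μ∘(Π⊗μ), μ∘(id⊗(μ∘(Π⊗id))) = μ∘((μ∘(id⊗Π))⊗id), and μ∘(id⊗(μ∘(id⊗Π))) = μ∘(μ⊗Π) hold for Π = Π_L = μ∘(id⊗λ)∘δ. -/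

import Mathlib

set_option maxHeartbeats 1000000


open TensorProduct

noncomputable section

namespace DoiHopf

variable (k : Type) [Field k]
variable (H : Type) [AddCommGroup H] [Module k H]

variable (mul : H ⊗[k] H →ₗ[k] H) (one : H) (eps : H →ₗ[k] k)
variable (delta : H →ₗ[k] H ⊗[k] H) (lam : H →ₗ[k] H)

/-- regroup `(x ⊗ (y₁ ⊗ y₂)) ⊗ z ↦ (x ⊗ y₁) ⊗ (y₂ ⊗ z)`. -/
def regroup : (H ⊗[k] (H ⊗[k] H)) ⊗[k] H →ₗ[k] (H ⊗[k] H) ⊗[k] (H ⊗[k] H) :=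
  (TensorProduct.assoc k (H ⊗[k] H) H H).toLinearMap
    ∘ₗ ((TensorProduct.assoc k H H H).symm.toLinearMap.rTensor H)

/-- `(id ⊗ f ⊗ id) : (H⊗H)⊗(H⊗H) → (H⊗H)⊗H` applying `f` to the middle factors. -/
def middle (f : H ⊗[k] H →ₗ[k] H) :
    (H ⊗[k] H) ⊗[k] (H ⊗[k] H) →ₗ[k] (H ⊗[k] H) ⊗[k] H :=
  (TensorProduct.assoc k H H H).symm.toLinearMap
    ∘ₗ ((f.rTensor H ∘ₗ (TensorProduct.assoc k H H H).symm.toLinearMap).lTensor H)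
    ∘ₗ (TensorProduct.assoc k H H (H ⊗[k] H)).toLinearMap

/-- `Π_L = id ∗ λ = μ ∘ (id ⊗ λ) ∘ δ`. -/
def PiL : H →ₗ[k] H := mul ∘ₗ lam.lTensor H ∘ₗ delta

/-- `Π_R = λ ∗ id = μ ∘ (λ ⊗ id) ∘ δ`. -/
def PiR : H →ₗ[k] H := mul ∘ₗ lam.rTensor H ∘ₗ delta

/-- `(ε∘μ ⊗ id) ∘ (id ⊗ swap) ∘ (δ(1) ⊗ id)`, i.e. `x ↦ ε(1₍₁₎ x) 1₍₂₎`. -/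
def PiLformula : H →ₗ[k] H :=
  (TensorProduct.lid k H).toLinearMap
    ∘ₗ ((eps ∘ₗ mul).rTensor H)
    ∘ₗ (TensorProduct.assoc k H H H).symm.toLinearMap
    ∘ₗ ((TensorProduct.comm k H H).toLinearMap.lTensor H)
    ∘ₗ (TensorProduct.assoc k H H H).toLinearMap
    ∘ₗ (TensorProduct.mk k (H ⊗[k] H) H (delta one))

/-- `(id ⊗ ε∘μ) ∘ (swap ⊗ id) ∘ (id ⊗ δ(1))`, i.e. `x ↦ ε(x 1₍₂₎) 1₍₁₎`. -/
def PiRformula : H →ₗ[k] H :=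
  (TensorProduct.rid k H).toLinearMap
    ∘ₗ ((eps ∘ₗ mul).lTensor H)
    ∘ₗ (TensorProduct.assoc k H H H).toLinearMap
    ∘ₗ ((TensorProduct.comm k H H).toLinearMap.rTensor H)
    ∘ₗ (TensorProduct.assoc k H H H).symm.toLinearMap
    ∘ₗ ((TensorProduct.mk k H (H ⊗[k] H)).flip (delta one))

/-- A weak Hopf quasigroup: a unital magma and comonoid satisfying axioms
(a1)–(a4-7) of Alonso Álvarez–Fernández Vilaboa–González Rodríguez. -/
structure IsWeakHopfQuasigroup : Prop where
  one_mul : ∀ x, mul (one ⊗ₜ[k] x) = x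
  mul_one : ∀ x, mul (x ⊗ₜ[k] one) = x
  coassoc : (TensorProduct.assoc k H H H).toLinearMap ∘ₗ delta.rTensor H ∘ₗ delta
      = delta.lTensor H ∘ₗ delta
  counit_left : ∀ x, (TensorProduct.lid k H) ((eps.rTensor H) (delta x)) = x
  counit_right : ∀ x, (TensorProduct.rid k H) ((eps.lTensor H) (delta x)) = x
  delta_mul : delta ∘ₗ mul = (TensorProduct.map mul mul)
      ∘ₗ (TensorProduct.tensorTensorTensorComm k H H H H).toLinearMap
      ∘ₗ (TensorProduct.map delta delta)
  weak_counit₀ : eps ∘ₗ mul ∘ₗ mul.rTensor H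
      = eps ∘ₗ mul ∘ₗ mul.lTensor H ∘ₗ (TensorProduct.assoc k H H H).toLinearMap
  weak_counit₁ : eps ∘ₗ mul ∘ₗ mul.rTensor H
      = (TensorProduct.lid k k).toLinearMap
        ∘ₗ (TensorProduct.map (eps ∘ₗ mul) (eps ∘ₗ mul))
        ∘ₗ regroup k H ∘ₗ ((delta.lTensor H).rTensor H)
  weak_counit₂ : eps ∘ₗ mul ∘ₗ mul.rTensor H
      = (TensorProduct.lid k k).toLinearMap
        ∘ₗ (TensorProduct.map (eps ∘ₗ mul) (eps ∘ₗ mul))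
        ∘ₗ regroup k H
        ∘ₗ ((((TensorProduct.comm k H H).toLinearMap ∘ₗ delta).lTensor H).rTensor H)
  weak_unit₁ : delta.rTensor H (delta one)
      = middle k H mul (delta one ⊗ₜ[k] delta one)
  weak_unit₂ : delta.rTensor H (delta one)
      = middle k H (mul ∘ₗ (TensorProduct.comm k H H).toLinearMap)
          (delta one ⊗ₜ[k] delta one)
  piL_eq : PiL k H mul delta lam = PiLformula k H mul one eps delta
  piR_eq : PiR k H mul delta lam = PiRformula k H mul one eps delta
  lam_piL : mul ∘ₗ (TensorProduct.map lam (PiL k H mul delta lam)) ∘ₗ delta = lam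
  piR_lam : mul ∘ₗ (TensorProduct.map (PiR k H mul delta lam) lam) ∘ₗ delta = lam
  a44 : mul ∘ₗ (TensorProduct.map lam mul)
      ∘ₗ (TensorProduct.assoc k H H H).toLinearMap ∘ₗ delta.rTensor H
      = mul ∘ₗ (PiR k H mul delta lam).rTensor H
  a45 : mul ∘ₗ (TensorProduct.map (LinearMap.id : H →ₗ[k] H) (mul ∘ₗ lam.rTensor H))
      ∘ₗ (TensorProduct.assoc k H H H).toLinearMap ∘ₗ delta.rTensor H
      = mul ∘ₗ (PiL k H mul delta lam).rTensor H
  a46 : mul ∘ₗ (TensorProduct.map mul lam)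
      ∘ₗ (TensorProduct.assoc k H H H).symm.toLinearMap ∘ₗ delta.lTensor H
      = mul ∘ₗ (PiL k H mul delta lam).lTensor H
  a47 : mul ∘ₗ (TensorProduct.map (mul ∘ₗ lam.lTensor H) (LinearMap.id : H →ₗ[k] H))
      ∘ₗ (TensorProduct.assoc k H H H).symm.toLinearMap ∘ₗ delta.lTensor H
      = mul ∘ₗ (PiR k H mul delta lam).lTensor H



-- ===== auxiliary development =====

@[simp] lemma middle_tmul (f : H ⊗[k] H →ₗ[k] H) (a b c d : H) :
    middle k H f ((a ⊗ₜ[k] b) ⊗ₜ[k] (c ⊗ₜ[k] d)) = (a ⊗ₜ[k] f (b ⊗ₜ[k] c)) ⊗ₜ[k] d := by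
  simp [middle]

def ctr {V : Type} [AddCommGroup V] [Module k V] (φ : H →ₗ[k] k) (g : H →ₗ[k] V) :
    H ⊗[k] H →ₗ[k] V :=
  (TensorProduct.lid k V).toLinearMap ∘ₗ TensorProduct.map φ g

@[simp] lemma ctr_tmul {V : Type} [AddCommGroup V] [Module k V]
    (φ : H →ₗ[k] k) (g : H →ₗ[k] V) (a b : H) :
    ctr k H φ g (a ⊗ₜ[k] b) = φ a • g b := by simp [ctr]

def ctr2 {V : Type} [AddCommGroup V] [Module k V]
    (φ : H ⊗[k] H →ₗ[k] k) (g : H ⊗[k] H →ₗ[k] V) :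
    (H ⊗[k] H) ⊗[k] (H ⊗[k] H) →ₗ[k] V :=
  (TensorProduct.lid k V).toLinearMap ∘ₗ (TensorProduct.map φ g
    ∘ₗ (TensorProduct.tensorTensorTensorComm k H H H H).toLinearMap)

@[simp] lemma ctr2_tmul {V : Type} [AddCommGroup V] [Module k V]
    (φ : H ⊗[k] H →ₗ[k] k) (g : H ⊗[k] H →ₗ[k] V) (a b c d : H) :
    ctr2 k H φ g ((a ⊗ₜ[k] b) ⊗ₜ[k] (c ⊗ₜ[k] d)) = φ (a ⊗ₜ[k] c) • g (b ⊗ₜ[k] d) := by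
  simp [ctr2]

lemma ctr_comp {V : Type} [AddCommGroup V] [Module k V]
    (φ : H →ₗ[k] k) (g : H →ₗ[k] V) (f h : H →ₗ[k] H) :
    ctr k H φ g ∘ₗ TensorProduct.map f h = ctr k H (φ ∘ₗ f) (g ∘ₗ h) := by
  apply TensorProduct.ext'; intro a b; simp

def lmul (a : H) : H →ₗ[k] H := mul ∘ₗ TensorProduct.mk k H H a
def rmul (a : H) : H →ₗ[k] H := mul ∘ₗ (TensorProduct.mk k H H).flip a
def epsl (a : H) : H →ₗ[k] k := eps ∘ₗ lmul k H mul a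
def epsr (a : H) : H →ₗ[k] k := eps ∘ₗ rmul k H mul a
@[simp] lemma lmul_apply (a v : H) : lmul k H mul a v = mul (a ⊗ₜ[k] v) := rfl
@[simp] lemma rmul_apply (a v : H) : rmul k H mul a v = mul (v ⊗ₜ[k] a) := rfl
@[simp] lemma epsl_apply (a v : H) : epsl k H mul eps a v = eps (mul (a ⊗ₜ[k] v)) := rfl
@[simp] lemma epsr_apply (a v : H) : epsr k H mul eps a v = eps (mul (v ⊗ₜ[k] a)) := rfl

def FQ : H →ₗ[k] H :=
  (TensorProduct.rid k H).toLinearMap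
    ∘ₗ (LinearMap.lTensor H (eps ∘ₗ mul))
    ∘ₗ (TensorProduct.assoc k H H H).toLinearMap
    ∘ₗ (TensorProduct.mk k (H ⊗[k] H) H (delta one))

lemma ttc_tmul_opaque (p d : H) (s : H ⊗[k] H) :
    (TensorProduct.tensorTensorTensorComm k H H H H) ((p ⊗ₜ[k] d) ⊗ₜ[k] s)
      = TensorProduct.map (TensorProduct.mk k H H p) (TensorProduct.mk k H H d) s := by
  have h : (TensorProduct.tensorTensorTensorComm k H H H H).toLinearMap
        ∘ₗ TensorProduct.mk k (H ⊗[k] H) (H ⊗[k] H) (p ⊗ₜ[k] d)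
      = TensorProduct.map (TensorProduct.mk k H H p) (TensorProduct.mk k H H d) := by
    apply TensorProduct.ext'; intro a b; simp
  exact LinearMap.congr_fun h s

lemma ctr2_mk (φ : H ⊗[k] H →ₗ[k] k) (b a : H) (s : H ⊗[k] H) :
    ctr2 k H φ (LinearMap.id : H ⊗[k] H →ₗ[k] H ⊗[k] H) ((b ⊗ₜ[k] a) ⊗ₜ[k] s)
      = a ⊗ₜ[k] (ctr k H (φ ∘ₗ TensorProduct.mk k H H b) (LinearMap.id : H →ₗ[k] H) s) := by
  have h : (ctr2 k H φ (LinearMap.id : H ⊗[k] H →ₗ[k] H ⊗[k] H))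
        ∘ₗ TensorProduct.mk k (H⊗[k]H) (H⊗[k]H) (b ⊗ₜ[k] a)
      = (TensorProduct.mk k H H a) ∘ₗ ctr k H (φ ∘ₗ TensorProduct.mk k H H b)
          (LinearMap.id : H →ₗ[k] H) := by
    apply TensorProduct.ext'; intro s₁ s₂; simp [tmul_smul]
  exact LinearMap.congr_fun h s

lemma epsl_mul
    (hC0 : eps ∘ₗ mul ∘ₗ mul.rTensor H
      = eps ∘ₗ mul ∘ₗ mul.lTensor H ∘ₗ (TensorProduct.assoc k H H H).toLinearMap)
    (b c : H) :
    epsl k H mul eps (mul (b ⊗ₜ[k] c)) = epsl k H mul eps b ∘ₗ lmul k H mul c := by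
  apply LinearMap.ext; intro v
  have := LinearMap.congr_fun hC0 ((b ⊗ₜ[k] c) ⊗ₜ[k] v)
  simpa using this

lemma map_mul_mk (p q : H) (s : H ⊗[k] H) :
    (TensorProduct.map mul mul)
        ((TensorProduct.map (TensorProduct.mk k H H p) (TensorProduct.mk k H H q)) s)
      = (TensorProduct.map (lmul k H mul p) (lmul k H mul q)) s := by
  rw [← LinearMap.comp_apply, ← TensorProduct.map_comp]; rfl

lemma W3
    (hco : (TensorProduct.assoc k H H H).toLinearMap ∘ₗ delta.rTensor H ∘ₗ delta
      = delta.lTensor H ∘ₗ delta)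
    (hu1 : delta.rTensor H (delta one) = middle k H mul (delta one ⊗ₜ[k] delta one))
    (hdm : delta ∘ₗ mul = (TensorProduct.map mul mul)
      ∘ₗ (TensorProduct.tensorTensorTensorComm k H H H H).toLinearMap
      ∘ₗ (TensorProduct.map delta delta))
    (hcl : ∀ x, (TensorProduct.lid k H) ((eps.rTensor H) (delta x)) = x)
    (hC0 : eps ∘ₗ mul ∘ₗ mul.rTensor H
      = eps ∘ₗ mul ∘ₗ mul.lTensor H ∘ₗ (TensorProduct.assoc k H H H).toLinearMap)
    (h1m : ∀ x, mul (one ⊗ₜ[k] x) = x)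
    (w : H) :
    (LinearMap.lTensor H mul) ((TensorProduct.assoc k H H H) ((delta one) ⊗ₜ[k] w))
      = (LinearMap.rTensor H (FQ k H mul one eps delta)) (delta w) := by
  have h1 : ∀ t : H ⊗[k] H,
      (LinearMap.lTensor H mul) ((TensorProduct.assoc k H H H) (t ⊗ₜ[k] w))
        = (LinearMap.lTensor H (rmul k H mul w)) t := by
    intro t
    induction t using TensorProduct.induction_on with
    | zero => simp
    | tmul a b => simp
    | add s t hs ht => rw [add_tmul, map_add, map_add, hs, ht, map_add]
  have hrm : delta ∘ₗ rmul k H mul w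
      = ((TensorProduct.map mul mul)
          ∘ₗ (TensorProduct.tensorTensorTensorComm k H H H H).toLinearMap
          ∘ₗ ((TensorProduct.mk k (H⊗[k]H) (H⊗[k]H)).flip (delta w))) ∘ₗ delta := by
    apply LinearMap.ext; intro b
    have := LinearMap.congr_fun hdm (b ⊗ₜ[k] w)
    simpa using this
  have hid : ctr k H eps (LinearMap.id : H →ₗ[k] H) ∘ₗ delta = LinearMap.id := by
    apply LinearMap.ext; intro u
    have h : ctr k H eps (LinearMap.id : H →ₗ[k] H)
        = (TensorProduct.lid k H).toLinearMap ∘ₗ eps.rTensor H := by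
      apply TensorProduct.ext'; intro a b; simp [ctr]
    simp only [LinearMap.comp_apply, h, LinearMap.id_apply, LinearEquiv.coe_coe]
    exact hcl u
  set g₂ : H ⊗[k] H →ₗ[k] H := ctr k H eps LinearMap.id ∘ₗ ((TensorProduct.map mul mul)
      ∘ₗ (TensorProduct.tensorTensorTensorComm k H H H H).toLinearMap
      ∘ₗ ((TensorProduct.mk k (H⊗[k]H) (H⊗[k]H)).flip (delta w))) with hg₂
  have h2 : rmul k H mul w = g₂ ∘ₗ delta := by
    rw [hg₂, LinearMap.comp_assoc, ← hrm, ← LinearMap.comp_assoc, hid, LinearMap.id_comp]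
  have h3 : (LinearMap.lTensor H mul) ((TensorProduct.assoc k H H H) ((delta one) ⊗ₜ[k] w))
      = (LinearMap.lTensor H g₂) ((LinearMap.lTensor H delta) (delta one)) := by
    rw [h1, h2, LinearMap.lTensor_comp, LinearMap.comp_apply]
  have h4 : (LinearMap.lTensor H delta) (delta one)
      = (TensorProduct.assoc k H H H) (middle k H mul (delta one ⊗ₜ[k] delta one)) := by
    rw [← hu1]
    have := LinearMap.congr_fun hco one
    simpa using this.symm
  rw [h3, h4]
  set σ : H ⊗[k] H →ₗ[k] k := eps ∘ₗ mul with hσ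
  have key : ∀ t₁ t₂ : H ⊗[k] H,
      (LinearMap.lTensor H g₂) ((TensorProduct.assoc k H H H) (middle k H mul (t₁ ⊗ₜ[k] t₂)))
        = ctr2 k H σ LinearMap.id (((TensorProduct.comm k H H) t₁) ⊗ₜ[k]
            ((TensorProduct.map mul mul)
              ((TensorProduct.tensorTensorTensorComm k H H H H) (t₂ ⊗ₜ[k] delta w)))) := by
    intro t₁ t₂
    induction t₁ using TensorProduct.induction_on with
    | zero => simp
    | add s t hs ht =>
      rw [add_tmul, map_add, map_add, map_add, hs, ht, map_add, add_tmul, map_add]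
    | tmul a b =>
      induction t₂ using TensorProduct.induction_on with
      | zero => simp
      | add s t hs ht =>
        rw [tmul_add, map_add, map_add, map_add, hs, ht, add_tmul, map_add, map_add, tmul_add,
          map_add]
      | tmul c d =>
        rw [middle_tmul]
        simp only [assoc_tmul, LinearMap.lTensor_tmul, comm_tmul]
        have hL : g₂ (mul (b ⊗ₜ[k] c) ⊗ₜ[k] d)
            = ctr k H (eps ∘ₗ lmul k H mul (mul (b ⊗ₜ[k] c)))
                ((LinearMap.id : H →ₗ[k] H) ∘ₗ lmul k H mul d) (delta w) := by
          rw [hg₂]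
          simp only [LinearMap.comp_apply, LinearMap.flip_apply, TensorProduct.mk_apply,
            LinearEquiv.coe_coe]
          rw [ttc_tmul_opaque, map_mul_mk]
          have h6 := LinearMap.congr_fun
            (ctr_comp k H eps (LinearMap.id : H →ₗ[k] H)
              (lmul k H mul (mul (b ⊗ₜ[k] c))) (lmul k H mul d)) (delta w)
          simp only [LinearMap.comp_apply] at h6
          exact h6
        have hR : ctr2 k H σ (LinearMap.id : H ⊗[k] H →ₗ[k] H ⊗[k] H) ((b ⊗ₜ[k] a) ⊗ₜ[k]
              (TensorProduct.map mul mul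
                ((TensorProduct.tensorTensorTensorComm k H H H H) ((c ⊗ₜ[k] d) ⊗ₜ[k] delta w))))
            = a ⊗ₜ[k] ctr k H ((σ ∘ₗ TensorProduct.mk k H H b) ∘ₗ lmul k H mul c)
                ((LinearMap.id : H →ₗ[k] H) ∘ₗ lmul k H mul d) (delta w) := by
          rw [ttc_tmul_opaque, map_mul_mk, ctr2_mk]
          congr 1
          have h6 := LinearMap.congr_fun (ctr_comp k H (σ ∘ₗ TensorProduct.mk k H H b)
              (LinearMap.id : H →ₗ[k] H) (lmul k H mul c) (lmul k H mul d)) (delta w)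
          simp only [LinearMap.comp_apply] at h6
          exact h6
        rw [hL, hR]
        have hphi : eps ∘ₗ lmul k H mul (mul (b ⊗ₜ[k] c))
            = (σ ∘ₗ TensorProduct.mk k H H b) ∘ₗ lmul k H mul c := by
          apply LinearMap.ext; intro v
          simpa [hσ] using LinearMap.congr_fun (epsl_mul k H mul eps hC0 b c) v
        rw [hphi]
  rw [key]
  have hE : (TensorProduct.map mul mul)
      ((TensorProduct.tensorTensorTensorComm k H H H H) ((delta one) ⊗ₜ[k] delta w))
      = delta w := by
    have h := LinearMap.congr_fun hdm (one ⊗ₜ[k] w)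
    simp only [LinearMap.comp_apply, TensorProduct.map_tmul, LinearEquiv.coe_coe] at h
    rw [← h, h1m]
  rw [hE]
  -- final
  have final : ∀ s : H ⊗[k] H,
      ctr2 k H σ LinearMap.id (((TensorProduct.comm k H H) (delta one)) ⊗ₜ[k] s)
        = (LinearMap.rTensor H (FQ k H mul one eps delta)) s := by
    intro s
    induction s using TensorProduct.induction_on with
    | zero => simp
    | add s t hs ht => rw [tmul_add, map_add, hs, ht, map_add]
    | tmul s₁ s₂ =>
      have hgen : ∀ t : H ⊗[k] H,
          ctr2 k H σ LinearMap.id (((TensorProduct.comm k H H) t) ⊗ₜ[k] (s₁ ⊗ₜ[k] s₂))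
            = ((TensorProduct.rid k H) ((LinearMap.lTensor H σ)
                ((TensorProduct.assoc k H H H) (t ⊗ₜ[k] s₁)))) ⊗ₜ[k] s₂ := by
        intro t
        induction t using TensorProduct.induction_on with
        | zero => simp
        | tmul c e => simp [smul_tmul']
        | add s t hs ht => simp only [map_add, add_tmul, tmul_add, hs, ht]
      rw [hgen]
      rfl
  exact final (delta w)


/-- `PiRformula` with `δ(1)` replaced by a free tensor `t`. -/
def FRgen (t : H ⊗[k] H) : H →ₗ[k] H :=
  (TensorProduct.rid k H).toLinearMap
    ∘ₗ ((eps ∘ₗ mul).lTensor H)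
    ∘ₗ (TensorProduct.assoc k H H H).toLinearMap
    ∘ₗ ((TensorProduct.comm k H H).toLinearMap.rTensor H)
    ∘ₗ (TensorProduct.assoc k H H H).symm.toLinearMap
    ∘ₗ ((TensorProduct.mk k H (H ⊗[k] H)).flip t)

lemma FRgen_one : FRgen k H mul eps (delta one) = PiRformula k H mul one eps delta := rfl

@[simp] lemma FRgen_tmul (a b v : H) :
    FRgen k H mul eps (a ⊗ₜ[k] b) v = eps (mul (v ⊗ₜ[k] b)) • a := by
  simp [FRgen]

lemma ttc_opaque_tmul (c d : H) (s : H ⊗[k] H) :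
    (TensorProduct.tensorTensorTensorComm k H H H H) (s ⊗ₜ[k] (c ⊗ₜ[k] d))
      = TensorProduct.map ((TensorProduct.mk k H H).flip c) ((TensorProduct.mk k H H).flip d)
          s := by
  have h : (TensorProduct.tensorTensorTensorComm k H H H H).toLinearMap
        ∘ₗ (TensorProduct.mk k (H ⊗[k] H) (H ⊗[k] H)).flip (c ⊗ₜ[k] d)
      = TensorProduct.map ((TensorProduct.mk k H H).flip c) ((TensorProduct.mk k H H).flip d) := by
    apply TensorProduct.ext'; intro a b; simp
  exact LinearMap.congr_fun h s

lemma ctr2_mkflip {V : Type} [AddCommGroup V] [Module k V]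
    (φ : H ⊗[k] H →ₗ[k] k) (g : H ⊗[k] H →ₗ[k] V) (q r : H) (s : H ⊗[k] H) :
    ctr2 k H φ g (s ⊗ₜ[k] (q ⊗ₜ[k] r))
      = ctr k H (φ ∘ₗ (TensorProduct.mk k H H).flip q) (g ∘ₗ (TensorProduct.mk k H H).flip r)
          s := by
  have h : (ctr2 k H φ g) ∘ₗ (TensorProduct.mk k (H⊗[k]H) (H⊗[k]H)).flip (q ⊗ₜ[k] r)
      = ctr k H (φ ∘ₗ (TensorProduct.mk k H H).flip q)
          (g ∘ₗ (TensorProduct.mk k H H).flip r) := by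
    apply TensorProduct.ext'; intro a b; simp
  exact LinearMap.congr_fun h s

lemma assoc_symm_opaque (c : H) (s : H ⊗[k] H) :
    (TensorProduct.assoc k H H H).symm (c ⊗ₜ[k] s)
      = (LinearMap.rTensor H (TensorProduct.mk k H H c)) s := by
  have h : (TensorProduct.assoc k H H H).symm.toLinearMap ∘ₗ (TensorProduct.mk k H (H⊗[k]H) c)
      = LinearMap.rTensor H (TensorProduct.mk k H H c) := by
    apply TensorProduct.ext'; intro a b; simp
  exact LinearMap.congr_fun h s

lemma map_map {M₁ M₂ M₃ N₁ N₂ N₃ : Type} [AddCommGroup M₁] [AddCommGroup M₂] [AddCommGroup M₃]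
    [AddCommGroup N₁] [AddCommGroup N₂] [AddCommGroup N₃] [Module k M₁] [Module k M₂]
    [Module k M₃] [Module k N₁] [Module k N₂] [Module k N₃]
    (f₂ : M₂ →ₗ[k] M₃) (f₁ : M₁ →ₗ[k] M₂) (g₂ : N₂ →ₗ[k] N₃) (g₁ : N₁ →ₗ[k] N₂)
    (s : M₁ ⊗[k] N₁) :
    (TensorProduct.map f₂ g₂) ((TensorProduct.map f₁ g₁) s)
      = (TensorProduct.map (f₂ ∘ₗ f₁) (g₂ ∘ₗ g₁)) s := by
  rw [← LinearMap.comp_apply, ← TensorProduct.map_comp]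

lemma epsr_mul
    (hC0 : eps ∘ₗ mul ∘ₗ mul.rTensor H
      = eps ∘ₗ mul ∘ₗ mul.lTensor H ∘ₗ (TensorProduct.assoc k H H H).toLinearMap)
    (c b : H) :
    epsr k H mul eps (mul (c ⊗ₜ[k] b)) = epsr k H mul eps b ∘ₗ rmul k H mul c := by
  apply LinearMap.ext; intro v
  have := LinearMap.congr_fun hC0 ((v ⊗ₜ[k] c) ⊗ₜ[k] b)
  simpa using this.symm

lemma W2
    (hco : (TensorProduct.assoc k H H H).toLinearMap ∘ₗ delta.rTensor H ∘ₗ delta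
      = delta.lTensor H ∘ₗ delta)
    (hu2 : delta.rTensor H (delta one)
      = middle k H (mul ∘ₗ (TensorProduct.comm k H H).toLinearMap) (delta one ⊗ₜ[k] delta one))
    (hdm : delta ∘ₗ mul = (TensorProduct.map mul mul)
      ∘ₗ (TensorProduct.tensorTensorTensorComm k H H H H).toLinearMap
      ∘ₗ (TensorProduct.map delta delta))
    (hcl : ∀ x, (TensorProduct.lid k H) ((eps.rTensor H) (delta x)) = x)
    (hC0 : eps ∘ₗ mul ∘ₗ mul.rTensor H
      = eps ∘ₗ mul ∘ₗ mul.lTensor H ∘ₗ (TensorProduct.assoc k H H H).toLinearMap)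
    (hm1 : ∀ x, mul (x ⊗ₜ[k] one) = x)
    (u : H) :
    (LinearMap.lTensor H (lmul k H mul u)) (delta one)
      = (LinearMap.rTensor H (PiRformula k H mul one eps delta)) (delta u) := by
  set σ : H ⊗[k] H →ₗ[k] k := eps ∘ₗ mul with hσ
  -- exp2 inline
  have exp2 : ∀ a b : H, ctr2 k H σ mul (delta a ⊗ₜ[k] delta b) = mul (a ⊗ₜ[k] b) := by
    intro a b
    have h1 : ctr2 k H σ mul
        = ctr k H eps LinearMap.id ∘ₗ (TensorProduct.map mul mul
            ∘ₗ (TensorProduct.tensorTensorTensorComm k H H H H).toLinearMap) := by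
      apply TensorProduct.ext_fourfold'; intro a b c d; simp [ctr, hσ]
    have h2 : (TensorProduct.map mul mul
        ∘ₗ (TensorProduct.tensorTensorTensorComm k H H H H).toLinearMap)
          (delta a ⊗ₜ[k] delta b) = delta (mul (a ⊗ₜ[k] b)) := by
      have := LinearMap.congr_fun hdm (a ⊗ₜ[k] b)
      simp only [LinearMap.comp_apply, TensorProduct.map_tmul] at this
      rw [this]; rfl
    rw [h1, LinearMap.comp_apply, h2]
    have h : ctr k H eps (LinearMap.id : H →ₗ[k] H)
        = (TensorProduct.lid k H).toLinearMap ∘ₗ eps.rTensor H := by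
      apply TensorProduct.ext'; intro a b; simp [ctr]
    rw [h]
    exact hcl _
  -- Θ
  set inner : H ⊗[k] H →ₗ[k] H := ctr2 k H σ mul ∘ₗ (TensorProduct.mk k (H⊗[k]H) (H⊗[k]H) (delta u))
    with hinner
  set Θ : (H ⊗[k] H) ⊗[k] H →ₗ[k] H ⊗[k] H :=
    (LinearMap.lTensor H inner) ∘ₗ (TensorProduct.assoc k H H H).toLinearMap with hΘ
  -- step K2
  have hK2 : delta u = (TensorProduct.map mul mul)
      ((TensorProduct.tensorTensorTensorComm k H H H H) (delta u ⊗ₜ[k] delta one)) := by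
    have h := LinearMap.congr_fun hdm (u ⊗ₜ[k] one)
    simp only [LinearMap.comp_apply, TensorProduct.map_tmul, LinearEquiv.coe_coe] at h
    rw [← h, hm1]
  -- key A
  have keyA : ∀ t₁ t₂ : H ⊗[k] H,
      (LinearMap.rTensor H (FRgen k H mul eps t₁))
          ((TensorProduct.map mul mul)
            ((TensorProduct.tensorTensorTensorComm k H H H H) (delta u ⊗ₜ[k] t₂)))
        = Θ (middle k H (mul ∘ₗ (TensorProduct.comm k H H).toLinearMap) (t₁ ⊗ₜ[k] t₂)) := by
    intro t₁ t₂
    induction t₁ using TensorProduct.induction_on with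
    | zero =>
      have : FRgen k H mul eps (0 : H ⊗[k] H) = 0 := by
        apply LinearMap.ext; intro v; simp [FRgen]
      simp [this, add_tmul]
    | add s t hs ht =>
      have hadd : FRgen k H mul eps (s + t) = FRgen k H mul eps s + FRgen k H mul eps t := by
        apply LinearMap.ext; intro v; simp [FRgen, tmul_add]
      rw [hadd, LinearMap.rTensor_add, LinearMap.add_apply, hs, ht, add_tmul, map_add, map_add]
    | tmul a b =>
      induction t₂ using TensorProduct.induction_on with
      | zero => simp
      | add s t hs ht => simp only [tmul_add, map_add, hs, ht]
      | tmul c d =>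
        rw [ttc_opaque_tmul, map_map, middle_tmul]
        have hth : Θ ((a ⊗ₜ[k] (mul ∘ₗ (TensorProduct.comm k H H).toLinearMap) (b ⊗ₜ[k] c))
              ⊗ₜ[k] d)
            = a ⊗ₜ[k] ctr k H (σ ∘ₗ (TensorProduct.mk k H H).flip (mul (c ⊗ₜ[k] b)))
                (mul ∘ₗ (TensorProduct.mk k H H).flip d) (delta u) := by
          rw [hΘ]
          simp only [LinearMap.comp_apply, LinearEquiv.coe_coe, assoc_tmul,
            LinearMap.lTensor_tmul, LinearMap.coe_comp, Function.comp_apply, comm_tmul]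
          rw [hinner]
          simp only [LinearMap.comp_apply, TensorProduct.mk_apply]
          rw [ctr2_mkflip]
        rw [hth]
        have hlhs : (LinearMap.rTensor H (FRgen k H mul eps (a ⊗ₜ[k] b)))
            ((TensorProduct.map (mul ∘ₗ (TensorProduct.mk k H H).flip c)
              (mul ∘ₗ (TensorProduct.mk k H H).flip d)) (delta u))
            = a ⊗ₜ[k] ctr k H (epsr k H mul eps b ∘ₗ rmul k H mul c)
                (mul ∘ₗ (TensorProduct.mk k H H).flip d) (delta u) := by
          have h7 : LinearMap.rTensor H (FRgen k H mul eps (a ⊗ₜ[k] b))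
                ∘ₗ TensorProduct.map (mul ∘ₗ (TensorProduct.mk k H H).flip c)
                  (mul ∘ₗ (TensorProduct.mk k H H).flip d)
              = (TensorProduct.mk k H H a) ∘ₗ ctr k H (epsr k H mul eps b ∘ₗ rmul k H mul c)
                  (mul ∘ₗ (TensorProduct.mk k H H).flip d) := by
            apply TensorProduct.ext'; intro v w
            simp [smul_tmul']
          have := LinearMap.congr_fun h7 (delta u)
          simp only [LinearMap.comp_apply] at this
          exact this
        rw [hlhs]
        have hphi : epsr k H mul eps b ∘ₗ rmul k H mul c
            = σ ∘ₗ (TensorProduct.mk k H H).flip (mul (c ⊗ₜ[k] b)) := by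
          apply LinearMap.ext; intro v
          have := LinearMap.congr_fun hC0 ((v ⊗ₜ[k] c) ⊗ₜ[k] b)
          simpa [hσ] using this
        rw [hphi]
  -- assemble
  have step1 : (LinearMap.rTensor H (PiRformula k H mul one eps delta)) (delta u)
      = Θ (middle k H (mul ∘ₗ (TensorProduct.comm k H H).toLinearMap)
            (delta one ⊗ₜ[k] delta one)) := by
    rw [← FRgen_one, hK2]
    exact keyA (delta one) (delta one)
  rw [step1, ← hu2]
  have step2 : (delta.rTensor H) (delta one)
      = (TensorProduct.assoc k H H H).symm ((LinearMap.lTensor H delta) (delta one)) := by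
    have h := LinearMap.congr_fun hco one
    simp only [LinearMap.comp_apply, LinearEquiv.coe_coe] at h
    rw [← h]
    simp
  rw [step2]
  -- final collapse
  have final2 : ∀ t : H ⊗[k] H,
      Θ ((TensorProduct.assoc k H H H).symm ((LinearMap.lTensor H delta) t))
        = (LinearMap.lTensor H (lmul k H mul u)) t := by
    intro t
    induction t using TensorProduct.induction_on with
    | zero => simp
    | add s t hs ht => simp only [map_add, hs, ht]
    | tmul c e =>
      rw [LinearMap.lTensor_tmul, assoc_symm_opaque]
      have h8 : Θ ∘ₗ LinearMap.rTensor H (TensorProduct.mk k H H c)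
          = (TensorProduct.mk k H H c) ∘ₗ inner := by
        apply TensorProduct.ext'; intro s₁ s₂
        rw [hΘ]
        simp
      have h9 := LinearMap.congr_fun h8 (delta e)
      simp only [LinearMap.comp_apply] at h9
      rw [h9, hinner]
      simp only [LinearMap.comp_apply, TensorProduct.mk_apply]
      rw [exp2, LinearMap.lTensor_tmul]
      rfl
  rw [final2 (delta one)]



lemma exp2
    (hdm : delta ∘ₗ mul = (TensorProduct.map mul mul)
      ∘ₗ (TensorProduct.tensorTensorTensorComm k H H H H).toLinearMap
      ∘ₗ (TensorProduct.map delta delta))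
    (hcl : ∀ x, (TensorProduct.lid k H) ((eps.rTensor H) (delta x)) = x)
    (a b : H) :
    ctr2 k H (eps ∘ₗ mul) mul (delta a ⊗ₜ[k] delta b) = mul (a ⊗ₜ[k] b) := by
  have h1 : ctr2 k H (eps ∘ₗ mul) mul
      = ctr k H eps LinearMap.id ∘ₗ (TensorProduct.map mul mul
          ∘ₗ (TensorProduct.tensorTensorTensorComm k H H H H).toLinearMap) := by
    apply TensorProduct.ext_fourfold'; intro a b c d; simp [ctr]
  have h2 : (TensorProduct.map mul mul
      ∘ₗ (TensorProduct.tensorTensorTensorComm k H H H H).toLinearMap)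
        (delta a ⊗ₜ[k] delta b) = delta (mul (a ⊗ₜ[k] b)) := by
    have := LinearMap.congr_fun hdm (a ⊗ₜ[k] b)
    simp only [LinearMap.comp_apply, TensorProduct.map_tmul] at this
    rw [this]; rfl
  rw [h1, LinearMap.comp_apply, h2]
  have h : ctr k H eps (LinearMap.id : H →ₗ[k] H)
      = (TensorProduct.lid k H).toLinearMap ∘ₗ eps.rTensor H := by
    apply TensorProduct.ext'; intro a b; simp [ctr]
  rw [h]
  exact hcl _

lemma FL_apply (v : H) :
    PiLformula k H mul one eps delta v
      = ctr k H (epsr k H mul eps v) LinearMap.id (delta one) := by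
  have h : ∀ t : H ⊗[k] H,
      ((TensorProduct.lid k H).toLinearMap
        ∘ₗ ((eps ∘ₗ mul).rTensor H)
        ∘ₗ (TensorProduct.assoc k H H H).symm.toLinearMap
        ∘ₗ ((TensorProduct.comm k H H).toLinearMap.lTensor H)
        ∘ₗ (TensorProduct.assoc k H H H).toLinearMap) (t ⊗ₜ[k] v)
      = ctr k H (epsr k H mul eps v) LinearMap.id t := by
    intro t
    induction t using TensorProduct.induction_on with
    | zero => simp
    | tmul a b => simp
    | add s t hs ht => rw [add_tmul, map_add, map_add, hs, ht]
  exact h (delta one)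

lemma comp_ctr {V W : Type} [AddCommGroup V] [Module k V] [AddCommGroup W] [Module k W]
    (f : V →ₗ[k] W) (φ : H →ₗ[k] k) (g : H →ₗ[k] V) :
    f ∘ₗ ctr k H φ g = ctr k H φ (f ∘ₗ g) := by
  apply TensorProduct.ext'; intro a b; simp

lemma ctr_id_lTensor (φ : H →ₗ[k] k) (g : H →ₗ[k] H) :
    ctr k H φ (LinearMap.id : H →ₗ[k] H) ∘ₗ LinearMap.lTensor H g = ctr k H φ g := by
  apply TensorProduct.ext'; intro a b; simp

lemma ctr_id_rTensor (φ : H →ₗ[k] k) (f : H →ₗ[k] H) :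
    ctr k H φ (LinearMap.id : H →ₗ[k] H) ∘ₗ LinearMap.rTensor H f
      = ctr k H (φ ∘ₗ f) (LinearMap.id : H →ₗ[k] H) := by
  apply TensorProduct.ext'; intro a b; simp

lemma regroup_opaque (w v : H) (s : H ⊗[k] H) :
    regroup k H ((w ⊗ₜ[k] s) ⊗ₜ[k] v)
      = (TensorProduct.map (TensorProduct.mk k H H w) ((TensorProduct.mk k H H).flip v)) s := by
  have h : (regroup k H) ∘ₗ ((TensorProduct.mk k (H ⊗[k] (H ⊗[k] H)) H).flip v)
        ∘ₗ (TensorProduct.mk k H (H ⊗[k] H) w)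
      = (TensorProduct.map (TensorProduct.mk k H H w) ((TensorProduct.mk k H H).flip v)) := by
    apply TensorProduct.ext'; intro a b; simp [regroup]
  exact LinearMap.congr_fun h s

lemma eps_absorb
    (hC2 : eps ∘ₗ mul ∘ₗ mul.rTensor H
      = (TensorProduct.lid k k).toLinearMap
        ∘ₗ (TensorProduct.map (eps ∘ₗ mul) (eps ∘ₗ mul))
        ∘ₗ regroup k H
        ∘ₗ ((((TensorProduct.comm k H H).toLinearMap ∘ₗ delta).lTensor H).rTensor H))
    (hm1 : ∀ x, mul (x ⊗ₜ[k] one) = x)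
    (v : H) :
    epsr k H mul eps v ∘ₗ PiRformula k H mul one eps delta = epsr k H mul eps v := by
  apply LinearMap.ext; intro w
  have hgen : ∀ t : H ⊗[k] H,
      epsr k H mul eps v (FRgen k H mul eps t w)
        = (TensorProduct.lid k k) ((TensorProduct.map ((eps ∘ₗ mul) ∘ₗ TensorProduct.mk k H H w)
            ((eps ∘ₗ mul) ∘ₗ (TensorProduct.mk k H H).flip v))
              ((TensorProduct.comm k H H) t)) := by
    intro t
    induction t using TensorProduct.induction_on with
    | zero => simp [FRgen]
    | tmul c e => simp [smul_eq_mul, mul_comm]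
    | add s t hs ht =>
      have hadd : FRgen k H mul eps (s + t) = FRgen k H mul eps s + FRgen k H mul eps t := by
        apply LinearMap.ext; intro x; simp [FRgen, tmul_add]
      simp only [hadd, LinearMap.add_apply, map_add, hs, ht]
  have haxiom := LinearMap.congr_fun hC2 ((w ⊗ₜ[k] one) ⊗ₜ[k] v)
  simp only [LinearMap.comp_apply, LinearMap.rTensor_tmul, LinearMap.lTensor_tmul,
    LinearEquiv.coe_coe] at haxiom
  rw [hm1] at haxiom
  -- haxiom : eps (mul (w ⊗ₜ v)) = (lid k k) ((map σ σ) (regroup ((w ⊗ₜ (comm (delta one))) ⊗ₜ v)))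
  rw [regroup_opaque] at haxiom
  rw [map_map] at haxiom
  have : epsr k H mul eps v (PiRformula k H mul one eps delta w) = eps (mul (w ⊗ₜ[k] v)) := by
    rw [← FRgen_one, hgen (delta one), ← haxiom]
  simpa using this

lemma AbsR
    (hco : (TensorProduct.assoc k H H H).toLinearMap ∘ₗ delta.rTensor H ∘ₗ delta
      = delta.lTensor H ∘ₗ delta)
    (hu2 : delta.rTensor H (delta one)
      = middle k H (mul ∘ₗ (TensorProduct.comm k H H).toLinearMap) (delta one ⊗ₜ[k] delta one))
    (hdm : delta ∘ₗ mul = (TensorProduct.map mul mul)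
      ∘ₗ (TensorProduct.tensorTensorTensorComm k H H H H).toLinearMap
      ∘ₗ (TensorProduct.map delta delta))
    (hcl : ∀ x, (TensorProduct.lid k H) ((eps.rTensor H) (delta x)) = x)
    (hC0 : eps ∘ₗ mul ∘ₗ mul.rTensor H
      = eps ∘ₗ mul ∘ₗ mul.lTensor H ∘ₗ (TensorProduct.assoc k H H H).toLinearMap)
    (hC2 : eps ∘ₗ mul ∘ₗ mul.rTensor H
      = (TensorProduct.lid k k).toLinearMap
        ∘ₗ (TensorProduct.map (eps ∘ₗ mul) (eps ∘ₗ mul))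
        ∘ₗ regroup k H
        ∘ₗ ((((TensorProduct.comm k H H).toLinearMap ∘ₗ delta).lTensor H).rTensor H))
    (hm1 : ∀ x, mul (x ⊗ₜ[k] one) = x)
    (u v : H) :
    mul (u ⊗ₜ[k] PiLformula k H mul one eps delta v)
      = ctr k H (epsr k H mul eps v) LinearMap.id (delta u) := by
  rw [FL_apply]
  have s1 : mul (u ⊗ₜ[k] ctr k H (epsr k H mul eps v) LinearMap.id (delta one))
      = ctr k H (epsr k H mul eps v) (lmul k H mul u) (delta one) := by
    have h := LinearMap.congr_fun
      (comp_ctr k H (lmul k H mul u) (epsr k H mul eps v) (LinearMap.id : H →ₗ[k] H)) (delta one)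
    simp only [LinearMap.comp_apply, LinearMap.comp_id] at h
    simpa using h
  rw [s1]
  have s2 : ctr k H (epsr k H mul eps v) (lmul k H mul u) (delta one)
      = ctr k H (epsr k H mul eps v) LinearMap.id
          ((LinearMap.lTensor H (lmul k H mul u)) (delta one)) := by
    have h := LinearMap.congr_fun
      (ctr_id_lTensor k H (epsr k H mul eps v) (lmul k H mul u)) (delta one)
    simp only [LinearMap.comp_apply] at h
    rw [h]
  rw [s2, W2 k H mul one eps delta hco hu2 hdm hcl hC0 hm1 u]
  have s3 := LinearMap.congr_fun
    (ctr_id_rTensor k H (epsr k H mul eps v) (PiRformula k H mul one eps delta)) (delta u)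
  simp only [LinearMap.comp_apply] at s3
  rw [s3, eps_absorb k H mul one eps delta hC2 hm1 v]


lemma key3
    (hH : IsWeakHopfQuasigroup k H mul one eps delta lam)
    (x z : H) (y : H) :
    ctr2 k H ((epsr k H mul eps z) ∘ₗ mul) mul (delta x ⊗ₜ[k] delta y)
      = ctr k H (epsr k H mul eps z) (lmul k H mul x) (delta y) := by
  set σ : H ⊗[k] H →ₗ[k] k := eps ∘ₗ mul with hσ
  set inner3 : H ⊗[k] H →ₗ[k] H :=
    ctr2 k H σ mul ∘ₗ (TensorProduct.mk k (H⊗[k]H) (H⊗[k]H) (delta x)) with hinner3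
  set Ahat : (H ⊗[k] H) ⊗[k] H →ₗ[k] H :=
    (TensorProduct.lid k H).toLinearMap
      ∘ₗ (TensorProduct.map (epsr k H mul eps z) inner3)
      ∘ₗ (TensorProduct.assoc k H H H).toLinearMap with hAhat
  -- step ii : hA
  have hA : ctr2 k H ((epsr k H mul eps z) ∘ₗ mul) mul
        ∘ₗ (TensorProduct.mk k (H⊗[k]H) (H⊗[k]H) (delta x))
      = Ahat ∘ₗ (delta.rTensor H) := by
    apply TensorProduct.ext'; intro a b
    simp only [LinearMap.comp_apply, TensorProduct.mk_apply, LinearMap.rTensor_tmul]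
    rw [ctr2_mkflip]
    -- Ahat (δa ⊗ b) = ctr (epsr z) (inner3 ∘ (mk).flip b) (δa)
    have hAb : Ahat ∘ₗ ((TensorProduct.mk k (H⊗[k]H) H).flip b)
        = ctr k H (epsr k H mul eps z) (inner3 ∘ₗ (TensorProduct.mk k H H).flip b) := by
      apply TensorProduct.ext'; intro p q
      simp [hAhat, ctr]
    have hAb' := LinearMap.congr_fun hAb (delta a)
    simp only [LinearMap.comp_apply, LinearMap.flip_apply, TensorProduct.mk_apply] at hAb'
    rw [hAb']
    -- C2 : rewrite the φ of LHS
    set ΦA : H →ₗ[k] k :=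
      (TensorProduct.lid k k).toLinearMap
        ∘ₗ (TensorProduct.map (epsr k H mul eps z) σ)
        ∘ₗ (LinearMap.lTensor H (TensorProduct.comm k H H).toLinearMap)
        ∘ₗ (TensorProduct.assoc k H H H).toLinearMap
        ∘ₗ (TensorProduct.mk k (H ⊗[k] H) H (delta a)) with hΦA
    have hφ : ((epsr k H mul eps z) ∘ₗ mul) ∘ₗ (TensorProduct.mk k H H).flip a = ΦA := by
      apply LinearMap.ext; intro v
      have hax := LinearMap.congr_fun hH.weak_counit₂ ((v ⊗ₜ[k] a) ⊗ₜ[k] z)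
      simp only [LinearMap.comp_apply, LinearMap.rTensor_tmul, LinearMap.lTensor_tmul,
        LinearEquiv.coe_coe] at hax
      rw [regroup_opaque, map_map] at hax
      -- hax : ε((va)z) = (lid kk)((map (σ∘mk v)(σ∘mk.flip z)) (comm (δa)))
      have hplumb : ∀ t : H ⊗[k] H,
          (TensorProduct.lid k k) ((TensorProduct.map ((eps ∘ₗ mul) ∘ₗ TensorProduct.mk k H H v)
            ((eps ∘ₗ mul) ∘ₗ (TensorProduct.mk k H H).flip z)) ((TensorProduct.comm k H H) t))
          = (TensorProduct.lid k k) ((TensorProduct.map (epsr k H mul eps z) σ)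
              ((LinearMap.lTensor H (TensorProduct.comm k H H).toLinearMap)
                ((TensorProduct.assoc k H H H) (t ⊗ₜ[k] v)))) := by
        intro t
        induction t using TensorProduct.induction_on with
        | zero => simp
        | tmul p q => simp [hσ, mul_comm]
        | add s t hs ht => simp only [map_add, add_tmul, hs, ht]
      simp only [LinearMap.comp_apply, LinearMap.flip_apply, TensorProduct.mk_apply,
        epsr_apply] at hax ⊢
      rw [hax, hplumb (delta a)]
      simp [hΦA]
    rw [hφ]
    -- interchange
    have hinter : ∀ t s : H ⊗[k] H,
        ctr k H ((TensorProduct.lid k k).toLinearMap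
            ∘ₗ (TensorProduct.map (epsr k H mul eps z) σ)
            ∘ₗ (LinearMap.lTensor H (TensorProduct.comm k H H).toLinearMap)
            ∘ₗ (TensorProduct.assoc k H H H).toLinearMap
            ∘ₗ (TensorProduct.mk k (H ⊗[k] H) H t))
          (mul ∘ₗ (TensorProduct.mk k H H).flip b) s
        = ctr k H (epsr k H mul eps z)
            ((ctr2 k H σ mul ∘ₗ (TensorProduct.mk k (H⊗[k]H) (H⊗[k]H) s))
              ∘ₗ (TensorProduct.mk k H H).flip b) t := by
      intro t s
      induction t using TensorProduct.induction_on with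
      | zero =>
        simp only [TensorProduct.zero_tmul, map_zero]
        have h0 : ∀ v : H, ((TensorProduct.lid k k).toLinearMap
            ∘ₗ (TensorProduct.map (epsr k H mul eps z) σ)
            ∘ₗ (LinearMap.lTensor H (TensorProduct.comm k H H).toLinearMap)
            ∘ₗ (TensorProduct.assoc k H H H).toLinearMap
            ∘ₗ (TensorProduct.mk k (H ⊗[k] H) H 0)) v = 0 := by intro v; simp
        induction s using TensorProduct.induction_on with
        | zero => simp
        | tmul v w => simp [h0]
        | add s' t' hs ht => simp only [map_add, hs, ht, add_zero]
      | add s' t' hs ht =>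
        have hadd : ∀ v : H, ((TensorProduct.mk k (H ⊗[k] H) H (s' + t')) v)
            = (TensorProduct.mk k (H ⊗[k] H) H s') v + (TensorProduct.mk k (H ⊗[k] H) H t') v := by
          intro v; simp [add_tmul]
        have hmapadd : ((TensorProduct.lid k k).toLinearMap
            ∘ₗ (TensorProduct.map (epsr k H mul eps z) σ)
            ∘ₗ (LinearMap.lTensor H (TensorProduct.comm k H H).toLinearMap)
            ∘ₗ (TensorProduct.assoc k H H H).toLinearMap
            ∘ₗ (TensorProduct.mk k (H ⊗[k] H) H (s' + t')))
          = ((TensorProduct.lid k k).toLinearMap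
            ∘ₗ (TensorProduct.map (epsr k H mul eps z) σ)
            ∘ₗ (LinearMap.lTensor H (TensorProduct.comm k H H).toLinearMap)
            ∘ₗ (TensorProduct.assoc k H H H).toLinearMap
            ∘ₗ (TensorProduct.mk k (H ⊗[k] H) H s'))
            + ((TensorProduct.lid k k).toLinearMap
            ∘ₗ (TensorProduct.map (epsr k H mul eps z) σ)
            ∘ₗ (LinearMap.lTensor H (TensorProduct.comm k H H).toLinearMap)
            ∘ₗ (TensorProduct.assoc k H H H).toLinearMap
            ∘ₗ (TensorProduct.mk k (H ⊗[k] H) H t')) := by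
          apply LinearMap.ext; intro v
          simp [add_tmul]
        have hctradd : ∀ (φ ψ : H →ₗ[k] k) (g : H →ₗ[k] H) (u : H ⊗[k] H),
            ctr k H (φ + ψ) g u = ctr k H φ g u + ctr k H ψ g u := by
          intro φ ψ g u
          induction u using TensorProduct.induction_on with
          | zero => simp
          | tmul a' b' => simp [add_smul]
          | add u' v' hu hv => simp only [map_add, hu, hv]; abel
        rw [hmapadd, hctradd, hs, ht, map_add]
      | tmul p q =>
        induction s using TensorProduct.induction_on with
        | zero => simp
        | tmul v w => simp [smul_smul, hσ, mul_comm]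
        | add s' t' hs ht =>
          have hadd2 : ((ctr2 k H σ mul ∘ₗ (TensorProduct.mk k (H⊗[k]H) (H⊗[k]H) (s' + t')))
              ∘ₗ (TensorProduct.mk k H H).flip b)
            = ((ctr2 k H σ mul ∘ₗ (TensorProduct.mk k (H⊗[k]H) (H⊗[k]H) s'))
              ∘ₗ (TensorProduct.mk k H H).flip b)
              + ((ctr2 k H σ mul ∘ₗ (TensorProduct.mk k (H⊗[k]H) (H⊗[k]H) t'))
              ∘ₗ (TensorProduct.mk k H H).flip b) := by
            apply LinearMap.ext; intro v; simp [add_tmul]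
          have hctrg : ∀ (φ : H →ₗ[k] k) (g g' : H →ₗ[k] H) (u : H ⊗[k] H),
              ctr k H φ (g + g') u = ctr k H φ g u + ctr k H φ g' u := by
            intro φ g g' u
            induction u using TensorProduct.induction_on with
            | zero => simp
            | tmul a' b' => simp [smul_add]
            | add u' v' hu hv => simp only [map_add, hu, hv]; abel
          rw [hadd2, hctrg, ← hs, ← ht, map_add]
    exact hinter (delta a) (delta x)
  -- step iii + iv
  have lhs_eq := LinearMap.congr_fun hA (delta y)
  simp only [LinearMap.comp_apply, TensorProduct.mk_apply] at lhs_eq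
  rw [lhs_eq]
  have hco := hH.coassoc
  have step2 : (delta.rTensor H) (delta y)
      = (TensorProduct.assoc k H H H).symm ((LinearMap.lTensor H delta) (delta y)) := by
    have h := LinearMap.congr_fun hco y
    simp only [LinearMap.comp_apply, LinearEquiv.coe_coe] at h
    rw [← h]; simp
  rw [step2]
  have final3 : ∀ t : H ⊗[k] H,
      Ahat ((TensorProduct.assoc k H H H).symm ((LinearMap.lTensor H delta) t))
        = ctr k H (epsr k H mul eps z) (lmul k H mul x) t := by
    intro t
    induction t using TensorProduct.induction_on with
    | zero => simp
    | add s t hs ht => simp only [map_add, hs, ht]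
    | tmul p q =>
      rw [LinearMap.lTensor_tmul, assoc_symm_opaque]
      have h8 : Ahat ∘ₗ LinearMap.rTensor H (TensorProduct.mk k H H p)
          = (epsr k H mul eps z p) • inner3 := by
        apply TensorProduct.ext'; intro q₁ q₂
        simp [hAhat]
      have h9 := LinearMap.congr_fun h8 (delta q)
      simp only [LinearMap.comp_apply, LinearMap.smul_apply] at h9
      rw [h9, hinner3]
      simp only [LinearMap.comp_apply, TensorProduct.mk_apply]
      rw [exp2 k H mul eps delta hH.delta_mul hH.counit_left x q]
      simp
  exact final3 (delta y)


lemma ctr_delta_mul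
    (hdm : delta ∘ₗ mul = (TensorProduct.map mul mul)
      ∘ₗ (TensorProduct.tensorTensorTensorComm k H H H H).toLinearMap
      ∘ₗ (TensorProduct.map delta delta))
    (φ : H →ₗ[k] k) (a b : H) :
    ctr k H φ LinearMap.id (delta (mul (a ⊗ₜ[k] b)))
      = ctr2 k H (φ ∘ₗ mul) mul (delta a ⊗ₜ[k] delta b) := by
  have h1 : ctr2 k H (φ ∘ₗ mul) mul
      = ctr k H φ LinearMap.id ∘ₗ (TensorProduct.map mul mul
          ∘ₗ (TensorProduct.tensorTensorTensorComm k H H H H).toLinearMap) := by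
    apply TensorProduct.ext_fourfold'; intro a b c d; simp
  have h2 : (TensorProduct.map mul mul
      ∘ₗ (TensorProduct.tensorTensorTensorComm k H H H H).toLinearMap)
        (delta a ⊗ₜ[k] delta b) = delta (mul (a ⊗ₜ[k] b)) := by
    have := LinearMap.congr_fun hdm (a ⊗ₜ[k] b)
    simp only [LinearMap.comp_apply, TensorProduct.map_tmul] at this
    rw [this]; rfl
  rw [h1, LinearMap.comp_apply, h2]

lemma conj3
    (hH : IsWeakHopfQuasigroup k H mul one eps delta lam)
    (x y z : H) :
    mul (x ⊗ₜ[k] mul (y ⊗ₜ[k] PiLformula k H mul one eps delta z))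
      = mul (mul (x ⊗ₜ[k] y) ⊗ₜ[k] PiLformula k H mul one eps delta z) := by
  have habs := AbsR k H mul one eps delta hH.coassoc hH.weak_unit₂ hH.delta_mul hH.counit_left
    hH.weak_counit₀ hH.weak_counit₂ hH.mul_one
  rw [habs y z, habs (mul (x ⊗ₜ[k] y)) z]
  have s1 : mul (x ⊗ₜ[k] ctr k H (epsr k H mul eps z) LinearMap.id (delta y))
      = ctr k H (epsr k H mul eps z) (lmul k H mul x) (delta y) := by
    have h := LinearMap.congr_fun
      (comp_ctr k H (lmul k H mul x) (epsr k H mul eps z) (LinearMap.id : H →ₗ[k] H)) (delta y)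
    simp only [LinearMap.comp_apply, LinearMap.comp_id] at h
    simpa using h
  rw [s1, ctr_delta_mul k H mul delta hH.delta_mul (epsr k H mul eps z) x y,
    key3 k H mul one eps delta lam hH x z y]


/-- `FQ` with `δ(1)` replaced by a free tensor. -/
def FQgen (t : H ⊗[k] H) : H →ₗ[k] H :=
  (TensorProduct.rid k H).toLinearMap
    ∘ₗ (LinearMap.lTensor H (eps ∘ₗ mul))
    ∘ₗ (TensorProduct.assoc k H H H).toLinearMap
    ∘ₗ (TensorProduct.mk k (H ⊗[k] H) H t)

lemma FQgen_one : FQgen k H mul eps (delta one) = FQ k H mul one eps delta := rfl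

@[simp] lemma FQgen_tmul (c e v : H) :
    FQgen k H mul eps (c ⊗ₜ[k] e) v = eps (mul (e ⊗ₜ[k] v)) • c := by
  simp [FQgen]

lemma FQgen_add (s t : H ⊗[k] H) :
    FQgen k H mul eps (s + t) = FQgen k H mul eps s + FQgen k H mul eps t := by
  apply LinearMap.ext; intro v; simp [FQgen, add_tmul]

lemma lTensor_rmul (w : H) (t : H ⊗[k] H) :
    (LinearMap.lTensor H mul) ((TensorProduct.assoc k H H H) (t ⊗ₜ[k] w))
      = (LinearMap.lTensor H (rmul k H mul w)) t := by
  induction t using TensorProduct.induction_on with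
  | zero => simp
  | tmul a b => simp
  | add s t hs ht => rw [add_tmul, map_add, map_add, hs, ht, map_add]

lemma ctr2_mk' {V : Type} [AddCommGroup V] [Module k V]
    (φ : H ⊗[k] H →ₗ[k] k) (g : H ⊗[k] H →ₗ[k] V) (a b : H) (s : H ⊗[k] H) :
    ctr2 k H φ g ((a ⊗ₜ[k] b) ⊗ₜ[k] s)
      = ctr k H (φ ∘ₗ TensorProduct.mk k H H a) (g ∘ₗ TensorProduct.mk k H H b) s := by
  have h : (ctr2 k H φ g) ∘ₗ TensorProduct.mk k (H⊗[k]H) (H⊗[k]H) (a ⊗ₜ[k] b)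
      = ctr k H (φ ∘ₗ TensorProduct.mk k H H a) (g ∘ₗ TensorProduct.mk k H H b) := by
    apply TensorProduct.ext'; intro s₁ s₂; simp
  exact LinearMap.congr_fun h s

lemma W3'
    (hH : IsWeakHopfQuasigroup k H mul one eps delta lam)
    (v w : H) :
    mul (PiLformula k H mul one eps delta v ⊗ₜ[k] w)
      = ctr k H ((epsr k H mul eps v) ∘ₗ FQ k H mul one eps delta) LinearMap.id (delta w) := by
  rw [FL_apply]
  have s1 : mul (ctr k H (epsr k H mul eps v) LinearMap.id (delta one) ⊗ₜ[k] w)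
      = ctr k H (epsr k H mul eps v) (rmul k H mul w) (delta one) := by
    have h := LinearMap.congr_fun
      (comp_ctr k H (rmul k H mul w) (epsr k H mul eps v) (LinearMap.id : H →ₗ[k] H)) (delta one)
    simp only [LinearMap.comp_apply, LinearMap.comp_id] at h
    simpa using h
  rw [s1]
  have s2 : ctr k H (epsr k H mul eps v) (rmul k H mul w) (delta one)
      = ctr k H (epsr k H mul eps v) LinearMap.id
          ((LinearMap.lTensor H (rmul k H mul w)) (delta one)) := by
    have h := LinearMap.congr_fun
      (ctr_id_lTensor k H (epsr k H mul eps v) (rmul k H mul w)) (delta one)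
    simp only [LinearMap.comp_apply] at h
    rw [h]
  rw [s2, ← lTensor_rmul,
    W3 k H mul one eps delta hH.coassoc hH.weak_unit₁ hH.delta_mul hH.counit_left
      hH.weak_counit₀ hH.one_mul w]
  have s3 := LinearMap.congr_fun
    (ctr_id_rTensor k H (epsr k H mul eps v) (FQ k H mul one eps delta)) (delta w)
  simp only [LinearMap.comp_apply] at s3
  rw [s3]

lemma phi_mul
    (hH : IsWeakHopfQuasigroup k H mul one eps delta lam)
    (x : H) :
    ((epsr k H mul eps x) ∘ₗ FQ k H mul one eps delta) ∘ₗ mul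
      = (TensorProduct.lid k k).toLinearMap
          ∘ₗ (TensorProduct.map ((epsr k H mul eps x) ∘ₗ FQ k H mul one eps delta) (eps ∘ₗ mul))
          ∘ₗ (TensorProduct.assoc k H H H).toLinearMap
          ∘ₗ (delta.rTensor H) := by
  apply TensorProduct.ext'; intro a b
  simp only [LinearMap.comp_apply, LinearMap.rTensor_tmul, LinearEquiv.coe_coe]
  rw [← FQgen_one]
  have hgen : ∀ t : H ⊗[k] H,
      epsr k H mul eps x (FQgen k H mul eps t (mul (a ⊗ₜ[k] b)))
        = (TensorProduct.lid k k)
            ((TensorProduct.map ((epsr k H mul eps x) ∘ₗ FQgen k H mul eps t) (eps ∘ₗ mul))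
              ((TensorProduct.assoc k H H H) ((delta a) ⊗ₜ[k] b))) := by
    intro t
    induction t using TensorProduct.induction_on with
    | zero =>
      have h0 : FQgen k H mul eps (0 : H ⊗[k] H) = 0 := by
        apply LinearMap.ext; intro u; simp [FQgen]
      have h1 : ∀ s : H ⊗[k] (H ⊗[k] H), (TensorProduct.map
          ((epsr k H mul eps x) ∘ₗ (0 : H →ₗ[k] H)) (eps ∘ₗ mul)) s = 0 := by
        intro s
        induction s using TensorProduct.induction_on with
        | zero => simp
        | tmul p q => simp
        | add s' t' hs ht => simp [hs, ht]
      simp [h0, h1]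
    | add s t hs ht =>
      have h1 : ∀ u : H ⊗[k] (H ⊗[k] H), (TensorProduct.map
          ((epsr k H mul eps x) ∘ₗ (FQgen k H mul eps s + FQgen k H mul eps t)) (eps ∘ₗ mul)) u
          = (TensorProduct.map ((epsr k H mul eps x) ∘ₗ FQgen k H mul eps s) (eps ∘ₗ mul)) u
            + (TensorProduct.map ((epsr k H mul eps x) ∘ₗ FQgen k H mul eps t) (eps ∘ₗ mul))
                u := by
        intro u
        induction u using TensorProduct.induction_on with
        | zero => simp
        | tmul p q => simp [add_tmul]
        | add s' t' hs' ht' => simp only [map_add, hs', ht']; abel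
      rw [FQgen_add]
      simp only [LinearMap.add_apply, map_add, hs, ht, h1]
    | tmul c e =>
      -- LHS = ε(e(ab)) * ε(cx)
      simp only [FQgen_tmul, map_smul, epsr_apply, smul_eq_mul]
      -- C0
      have hc0 := LinearMap.congr_fun hH.weak_counit₀ ((e ⊗ₜ[k] a) ⊗ₜ[k] b)
      simp only [LinearMap.comp_apply, LinearMap.rTensor_tmul, LinearMap.lTensor_tmul,
        LinearEquiv.coe_coe, assoc_tmul] at hc0
      rw [← hc0]
      -- C1
      have hc1 := LinearMap.congr_fun hH.weak_counit₁ ((e ⊗ₜ[k] a) ⊗ₜ[k] b)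
      simp only [LinearMap.comp_apply, LinearMap.rTensor_tmul, LinearMap.lTensor_tmul,
        LinearEquiv.coe_coe] at hc1
      rw [regroup_opaque, map_map] at hc1
      rw [hc1]
      -- both sides are contractions of δa
      have hfin : ∀ s : H ⊗[k] H,
          (TensorProduct.lid k k) ((TensorProduct.map ((eps ∘ₗ mul) ∘ₗ TensorProduct.mk k H H e)
              ((eps ∘ₗ mul) ∘ₗ (TensorProduct.mk k H H).flip b)) s) * eps (mul (c ⊗ₜ[k] x))
            = (TensorProduct.lid k k)
                ((TensorProduct.map ((epsr k H mul eps x) ∘ₗ FQgen k H mul eps (c ⊗ₜ[k] e))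
                  (eps ∘ₗ mul)) ((TensorProduct.assoc k H H H) (s ⊗ₜ[k] b))) := by
        intro s
        induction s using TensorProduct.induction_on with
        | zero => simp
        | tmul p q =>
          simp only [TensorProduct.map_tmul, LinearMap.comp_apply, TensorProduct.mk_apply,
            LinearMap.flip_apply, assoc_tmul, FQgen_tmul, map_smul, epsr_apply, smul_eq_mul,
            TensorProduct.lid_tmul, smul_eq_mul]
          try ring
        | add s' t' hs ht => simp only [map_add, add_tmul, hs, ht, add_mul]; try abel
      exact hfin (delta a)
  exact hgen (delta one)


lemma ctr_add_phi {V : Type} [AddCommGroup V] [Module k V]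
    (φ ψ : H →ₗ[k] k) (g : H →ₗ[k] V) (u : H ⊗[k] H) :
    ctr k H (φ + ψ) g u = ctr k H φ g u + ctr k H ψ g u := by
  induction u using TensorProduct.induction_on with
  | zero => simp
  | tmul a b => simp [add_smul]
  | add u v hu hv => simp only [map_add, hu, hv]; abel

lemma ctr_add_g {V : Type} [AddCommGroup V] [Module k V]
    (φ : H →ₗ[k] k) (g g' : H →ₗ[k] V) (u : H ⊗[k] H) :
    ctr k H φ (g + g') u = ctr k H φ g u + ctr k H φ g' u := by
  induction u using TensorProduct.induction_on with
  | zero => simp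
  | tmul a b => simp [smul_add]
  | add u v hu hv => simp only [map_add, hu, hv]; abel

lemma ctr_zero_phi {V : Type} [AddCommGroup V] [Module k V]
    (g : H →ₗ[k] V) (u : H ⊗[k] H) :
    ctr k H (0 : H →ₗ[k] k) g u = 0 := by
  induction u using TensorProduct.induction_on with
  | zero => simp
  | tmul a b => simp
  | add u v hu hv => simp [hu, hv]

lemma ctr_zero_g {V : Type} [AddCommGroup V] [Module k V]
    (φ : H →ₗ[k] k) (u : H ⊗[k] H) :
    ctr k H φ (0 : H →ₗ[k] V) u = 0 := by
  induction u using TensorProduct.induction_on with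
  | zero => simp
  | tmul a b => simp
  | add u v hu hv => simp [hu, hv]

lemma key1
    (hH : IsWeakHopfQuasigroup k H mul one eps delta lam)
    (x z y : H) :
    ctr2 k H (((epsr k H mul eps x) ∘ₗ FQ k H mul one eps delta) ∘ₗ mul) mul
        (delta y ⊗ₜ[k] delta z)
      = ctr k H ((epsr k H mul eps x) ∘ₗ FQ k H mul one eps delta) (rmul k H mul z)
          (delta y) := by
  set σ : H ⊗[k] H →ₗ[k] k := eps ∘ₗ mul with hσ
  set φ : H →ₗ[k] k := (epsr k H mul eps x) ∘ₗ FQ k H mul one eps delta with hφdef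
  set innerC : H ⊗[k] H →ₗ[k] H :=
    ctr2 k H σ mul ∘ₗ ((TensorProduct.mk k (H⊗[k]H) (H⊗[k]H)).flip (delta z)) with hinnerC
  set Chat : (H ⊗[k] H) ⊗[k] H →ₗ[k] H :=
    (TensorProduct.lid k H).toLinearMap
      ∘ₗ (TensorProduct.map φ innerC)
      ∘ₗ (TensorProduct.assoc k H H H).toLinearMap with hChat
  have hA : ctr2 k H (φ ∘ₗ mul) mul ∘ₗ ((TensorProduct.mk k (H⊗[k]H) (H⊗[k]H)).flip (delta z))
      = Chat ∘ₗ (delta.rTensor H) := by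
    apply TensorProduct.ext'; intro a b
    simp only [LinearMap.comp_apply, LinearMap.flip_apply, TensorProduct.mk_apply,
      LinearMap.rTensor_tmul]
    rw [ctr2_mk']
    have hAb : Chat ∘ₗ ((TensorProduct.mk k (H⊗[k]H) H).flip b)
        = ctr k H φ (innerC ∘ₗ (TensorProduct.mk k H H).flip b) := by
      apply TensorProduct.ext'; intro p q
      simp [hChat, ctr]
    have hAb' := LinearMap.congr_fun hAb (delta a)
    simp only [LinearMap.comp_apply, LinearMap.flip_apply, TensorProduct.mk_apply] at hAb'
    rw [hAb']
    -- rewrite LHS φ-leg via phi_mul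
    have hψ : (φ ∘ₗ mul) ∘ₗ TensorProduct.mk k H H a
        = (TensorProduct.lid k k).toLinearMap ∘ₗ (TensorProduct.map φ σ)
            ∘ₗ (TensorProduct.assoc k H H H).toLinearMap
            ∘ₗ (TensorProduct.mk k (H ⊗[k] H) H (delta a)) := by
      rw [hφdef, phi_mul k H mul one eps delta lam hH x]
      apply LinearMap.ext; intro v
      simp [hσ]
    rw [hψ]
    -- interchange
    have hinter : ∀ t s : H ⊗[k] H,
        ctr k H ((TensorProduct.lid k k).toLinearMap ∘ₗ (TensorProduct.map φ σ)
            ∘ₗ (TensorProduct.assoc k H H H).toLinearMap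
            ∘ₗ (TensorProduct.mk k (H ⊗[k] H) H t))
          (mul ∘ₗ TensorProduct.mk k H H b) s
        = ctr k H φ
            ((ctr2 k H σ mul ∘ₗ ((TensorProduct.mk k (H⊗[k]H) (H⊗[k]H)).flip s))
              ∘ₗ (TensorProduct.mk k H H).flip b) t := by
      intro t s
      induction t using TensorProduct.induction_on with
      | zero =>
        have h0 : ((TensorProduct.lid k k).toLinearMap ∘ₗ (TensorProduct.map φ σ)
            ∘ₗ (TensorProduct.assoc k H H H).toLinearMap
            ∘ₗ (TensorProduct.mk k (H ⊗[k] H) H (0 : H ⊗[k] H))) = 0 := by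
          apply LinearMap.ext; intro v; simp
        rw [h0, ctr_zero_phi]
        simp
      | add s' t' hs ht =>
        have hadd : ((TensorProduct.lid k k).toLinearMap ∘ₗ (TensorProduct.map φ σ)
            ∘ₗ (TensorProduct.assoc k H H H).toLinearMap
            ∘ₗ (TensorProduct.mk k (H ⊗[k] H) H (s' + t')))
          = ((TensorProduct.lid k k).toLinearMap ∘ₗ (TensorProduct.map φ σ)
            ∘ₗ (TensorProduct.assoc k H H H).toLinearMap
            ∘ₗ (TensorProduct.mk k (H ⊗[k] H) H s'))
            + ((TensorProduct.lid k k).toLinearMap ∘ₗ (TensorProduct.map φ σ)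
            ∘ₗ (TensorProduct.assoc k H H H).toLinearMap
            ∘ₗ (TensorProduct.mk k (H ⊗[k] H) H t')) := by
          apply LinearMap.ext; intro v; simp [add_tmul]
        rw [hadd, ctr_add_phi, hs, ht, map_add]
      | tmul p q =>
        induction s using TensorProduct.induction_on with
        | zero => simp [ctr_zero_g]
        | tmul v w => simp [smul_smul, hσ, mul_comm]
        | add s' t' hs ht =>
          have hadd2 : ((ctr2 k H σ mul
                ∘ₗ ((TensorProduct.mk k (H⊗[k]H) (H⊗[k]H)).flip (s' + t')))
              ∘ₗ (TensorProduct.mk k H H).flip b)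
            = ((ctr2 k H σ mul ∘ₗ ((TensorProduct.mk k (H⊗[k]H) (H⊗[k]H)).flip s'))
              ∘ₗ (TensorProduct.mk k H H).flip b)
              + ((ctr2 k H σ mul ∘ₗ ((TensorProduct.mk k (H⊗[k]H) (H⊗[k]H)).flip t'))
              ∘ₗ (TensorProduct.mk k H H).flip b) := by
            apply LinearMap.ext; intro u; simp [tmul_add]
          rw [hadd2, ctr_add_g, ← hs, ← ht, map_add]
    exact hinter (delta a) (delta z)
  have lhs_eq := LinearMap.congr_fun hA (delta y)
  simp only [LinearMap.comp_apply, LinearMap.flip_apply, TensorProduct.mk_apply] at lhs_eq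
  rw [lhs_eq]
  have step2 : (delta.rTensor H) (delta y)
      = (TensorProduct.assoc k H H H).symm ((LinearMap.lTensor H delta) (delta y)) := by
    have h := LinearMap.congr_fun hH.coassoc y
    simp only [LinearMap.comp_apply, LinearEquiv.coe_coe] at h
    rw [← h]; simp
  rw [step2]
  have final1 : ∀ t : H ⊗[k] H,
      Chat ((TensorProduct.assoc k H H H).symm ((LinearMap.lTensor H delta) t))
        = ctr k H φ (rmul k H mul z) t := by
    intro t
    induction t using TensorProduct.induction_on with
    | zero => simp
    | add s t hs ht => simp only [map_add, hs, ht]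
    | tmul p q =>
      rw [LinearMap.lTensor_tmul, assoc_symm_opaque]
      have h8 : Chat ∘ₗ LinearMap.rTensor H (TensorProduct.mk k H H p)
          = (φ p) • innerC := by
        apply TensorProduct.ext'; intro q₁ q₂
        simp [hChat]
      have h9 := LinearMap.congr_fun h8 (delta q)
      simp only [LinearMap.comp_apply, LinearMap.smul_apply] at h9
      rw [h9, hinnerC]
      simp only [LinearMap.comp_apply, LinearMap.flip_apply, TensorProduct.mk_apply]
      rw [exp2 k H mul eps delta hH.delta_mul hH.counit_left q z]
      simp
  exact final1 (delta y)

lemma conj1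
    (hH : IsWeakHopfQuasigroup k H mul one eps delta lam)
    (x y z : H) :
    mul (mul (PiLformula k H mul one eps delta x ⊗ₜ[k] y) ⊗ₜ[k] z)
      = mul (PiLformula k H mul one eps delta x ⊗ₜ[k] mul (y ⊗ₜ[k] z)) := by
  rw [W3' k H mul one eps delta lam hH x (mul (y ⊗ₜ[k] z)),
    W3' k H mul one eps delta lam hH x y]
  have s1 : mul ((ctr k H ((epsr k H mul eps x) ∘ₗ FQ k H mul one eps delta) LinearMap.id
        (delta y)) ⊗ₜ[k] z)
      = ctr k H ((epsr k H mul eps x) ∘ₗ FQ k H mul one eps delta) (rmul k H mul z)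
          (delta y) := by
    have h := LinearMap.congr_fun
      (comp_ctr k H (rmul k H mul z) ((epsr k H mul eps x) ∘ₗ FQ k H mul one eps delta)
        (LinearMap.id : H →ₗ[k] H)) (delta y)
    simp only [LinearMap.comp_apply, LinearMap.comp_id] at h
    simpa using h
  rw [s1, ctr_delta_mul k H mul delta hH.delta_mul
      ((epsr k H mul eps x) ∘ₗ FQ k H mul one eps delta) y z,
    key1 k H mul one eps delta lam hH x z y]


lemma assoc_opaque (q : H) (s : H ⊗[k] H) :
    (TensorProduct.assoc k H H H) (s ⊗ₜ[k] q)
      = (LinearMap.lTensor H ((TensorProduct.mk k H H).flip q)) s := by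
  have h : (TensorProduct.assoc k H H H).toLinearMap
        ∘ₗ ((TensorProduct.mk k (H ⊗[k] H) H).flip q)
      = LinearMap.lTensor H ((TensorProduct.mk k H H).flip q) := by
    apply TensorProduct.ext'; intro a b; simp
  exact LinearMap.congr_fun h s

lemma ctr2_map_right {V : Type} [AddCommGroup V] [Module k V]
    (φ : H ⊗[k] H →ₗ[k] k) (g : H ⊗[k] H →ₗ[k] V) (f h : H →ₗ[k] H) (s t : H ⊗[k] H) :
    ctr2 k H φ g (s ⊗ₜ[k] (TensorProduct.map f h) t)
      = ctr2 k H (φ ∘ₗ LinearMap.lTensor H f) (g ∘ₗ LinearMap.lTensor H h) (s ⊗ₜ[k] t) := by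
  have hm : (ctr2 k H φ g) ∘ₗ TensorProduct.map LinearMap.id (TensorProduct.map f h)
      = ctr2 k H (φ ∘ₗ LinearMap.lTensor H f) (g ∘ₗ LinearMap.lTensor H h) := by
    apply TensorProduct.ext_fourfold'; intro a b c d; simp
  have := LinearMap.congr_fun hm (s ⊗ₜ[k] t)
  simp only [LinearMap.comp_apply, TensorProduct.map_tmul, LinearMap.id_apply] at this
  exact this

lemma ctr2_map_left {V : Type} [AddCommGroup V] [Module k V]
    (φ : H ⊗[k] H →ₗ[k] k) (g : H ⊗[k] H →ₗ[k] V) (f h : H →ₗ[k] H) (s t : H ⊗[k] H) :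
    ctr2 k H φ g ((TensorProduct.map f h) s ⊗ₜ[k] t)
      = ctr2 k H (φ ∘ₗ LinearMap.rTensor H f) (g ∘ₗ LinearMap.rTensor H h) (s ⊗ₜ[k] t) := by
  have hm : (ctr2 k H φ g) ∘ₗ TensorProduct.map (TensorProduct.map f h) LinearMap.id
      = ctr2 k H (φ ∘ₗ LinearMap.rTensor H f) (g ∘ₗ LinearMap.rTensor H h) := by
    apply TensorProduct.ext_fourfold'; intro a b c d; simp
  have := LinearMap.congr_fun hm (s ⊗ₜ[k] t)
  simp only [LinearMap.comp_apply, TensorProduct.map_tmul, LinearMap.id_apply] at this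
  exact this

lemma ctr_smul_phi {V : Type} [AddCommGroup V] [Module k V]
    (c : k) (φ : H →ₗ[k] k) (g : H →ₗ[k] V) (u : H ⊗[k] H) :
    ctr k H (c • φ) g u = c • ctr k H φ g u := by
  induction u using TensorProduct.induction_on with
  | zero => simp
  | tmul a b => simp [smul_smul]
  | add u v hu hv => simp only [map_add, hu, hv, smul_add]

lemma ctr_smul_g {V : Type} [AddCommGroup V] [Module k V]
    (c : k) (φ : H →ₗ[k] k) (g : H →ₗ[k] V) (u : H ⊗[k] H) :
    ctr k H φ (c • g) u = c • ctr k H φ g u := by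
  induction u using TensorProduct.induction_on with
  | zero => simp
  | tmul a b => simp [smul_smul, mul_comm]
  | add u v hu hv => simp only [map_add, hu, hv, smul_add]

lemma DeltaFL
    (hH : IsWeakHopfQuasigroup k H mul one eps delta lam)
    (v : H) :
    delta (PiLformula k H mul one eps delta v)
      = (mul.rTensor H) ((TensorProduct.assoc k H H H).symm
          (PiLformula k H mul one eps delta v ⊗ₜ[k] delta one)) := by
  have d1 : delta (PiLformula k H mul one eps delta v)
      = ctr k H (epsr k H mul eps v) delta (delta one) := by
    rw [FL_apply]
    have h := LinearMap.congr_fun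
      (comp_ctr k H delta (epsr k H mul eps v) (LinearMap.id : H →ₗ[k] H)) (delta one)
    simp only [LinearMap.comp_apply, LinearMap.comp_id] at h
    exact h
  have d2 : ∀ t : H ⊗[k] H, ctr k H (epsr k H mul eps v) delta t
      = ((TensorProduct.lid k (H ⊗[k] H)).toLinearMap
          ∘ₗ (TensorProduct.map (epsr k H mul eps v)
              (LinearMap.id : H ⊗[k] H →ₗ[k] H ⊗[k] H)))
        ((LinearMap.lTensor H delta) t) := by
    intro t
    induction t using TensorProduct.induction_on with
    | zero => simp
    | tmul a b => simp
    | add s t hs ht => simp only [map_add, hs, ht]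
  have d3 : (LinearMap.lTensor H delta) (delta one)
      = (TensorProduct.assoc k H H H) (middle k H mul (delta one ⊗ₜ[k] delta one)) := by
    rw [← hH.weak_unit₁]
    have := LinearMap.congr_fun hH.coassoc one
    simpa using this.symm
  have d4 : ∀ t₁ t₂ : H ⊗[k] H,
      ((TensorProduct.lid k (H ⊗[k] H)).toLinearMap
          ∘ₗ (TensorProduct.map (epsr k H mul eps v)
              (LinearMap.id : H ⊗[k] H →ₗ[k] H ⊗[k] H)))
        ((TensorProduct.assoc k H H H) (middle k H mul (t₁ ⊗ₜ[k] t₂)))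
      = (mul.rTensor H) ((TensorProduct.assoc k H H H).symm
          ((ctr k H (epsr k H mul eps v) LinearMap.id t₁) ⊗ₜ[k] t₂)) := by
    intro t₁ t₂
    induction t₁ using TensorProduct.induction_on with
    | zero => simp
    | add s t hs ht =>
      simp only [add_tmul, map_add, hs, ht]
    | tmul a b =>
      induction t₂ using TensorProduct.induction_on with
      | zero => simp
      | add s t hs ht => simp only [tmul_add, map_add, hs, ht]
      | tmul c d =>
        rw [middle_tmul]
        simp only [LinearMap.comp_apply, LinearEquiv.coe_coe, assoc_tmul,
          TensorProduct.map_tmul, LinearMap.id_apply, TensorProduct.lid_tmul, ctr_tmul]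
        rw [← TensorProduct.smul_tmul']
        simp only [map_smul, LinearEquiv.coe_coe, TensorProduct.assoc_symm_tmul,
          LinearMap.rTensor_tmul]
  rw [d1, d2, d3, d4, FL_apply]


lemma rTensor_map (f : H →ₗ[k] H) :
    LinearMap.rTensor H f = TensorProduct.map f (LinearMap.id : H →ₗ[k] H) := by
  apply TensorProduct.ext'; intro a b; simp

lemma lTensor_map (f : H →ₗ[k] H) :
    LinearMap.lTensor H f = TensorProduct.map (LinearMap.id : H →ₗ[k] H) f := by
  apply TensorProduct.ext'; intro a b; simp

lemma map_mul_mkflip (p q : H) (s : H ⊗[k] H) :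
    (TensorProduct.map mul mul)
        ((TensorProduct.map ((TensorProduct.mk k H H).flip p)
          ((TensorProduct.mk k H H).flip q)) s)
      = (TensorProduct.map (rmul k H mul p) (rmul k H mul q)) s := by
  rw [← LinearMap.comp_apply, ← TensorProduct.map_comp]; rfl

lemma ctr2_add_phi {V : Type} [AddCommGroup V] [Module k V]
    (φ ψ : H ⊗[k] H →ₗ[k] k) (g : H ⊗[k] H →ₗ[k] V) (u : (H ⊗[k] H) ⊗[k] (H ⊗[k] H)) :
    ctr2 k H (φ + ψ) g u = ctr2 k H φ g u + ctr2 k H ψ g u := by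
  simp only [ctr2, LinearMap.comp_apply, TensorProduct.map_add_left, LinearMap.add_apply,
    map_add, LinearEquiv.coe_coe]

lemma ctr2_zero_phi {V : Type} [AddCommGroup V] [Module k V]
    (g : H ⊗[k] H →ₗ[k] V) (u : (H ⊗[k] H) ⊗[k] (H ⊗[k] H)) :
    ctr2 k H (0 : H ⊗[k] H →ₗ[k] k) g u = 0 := by
  simp only [ctr2, LinearMap.comp_apply, TensorProduct.map_zero_left, LinearMap.zero_apply,
    map_zero, LinearEquiv.coe_coe]

lemma ctr2_add_g {V : Type} [AddCommGroup V] [Module k V]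
    (φ : H ⊗[k] H →ₗ[k] k) (g g' : H ⊗[k] H →ₗ[k] V) (u : (H ⊗[k] H) ⊗[k] (H ⊗[k] H)) :
    ctr2 k H φ (g + g') u = ctr2 k H φ g u + ctr2 k H φ g' u := by
  simp only [ctr2, LinearMap.comp_apply, TensorProduct.map_add_right, LinearMap.add_apply,
    map_add, LinearEquiv.coe_coe]

lemma ctr2_zero_g {V : Type} [AddCommGroup V] [Module k V]
    (φ : H ⊗[k] H →ₗ[k] k) (u : (H ⊗[k] H) ⊗[k] (H ⊗[k] H)) :
    ctr2 k H φ (0 : H ⊗[k] H →ₗ[k] V) u = 0 := by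
  simp only [ctr2, LinearMap.comp_apply, TensorProduct.map_zero_right, LinearMap.zero_apply,
    map_zero, LinearEquiv.coe_coe]

lemma phiPL
    (hH : IsWeakHopfQuasigroup k H mul one eps delta lam)
    (y : H) :
    (eps ∘ₗ mul) ∘ₗ LinearMap.lTensor H
        (lmul k H mul (PiLformula k H mul one eps delta y) ∘ₗ FQ k H mul one eps delta)
      = (eps ∘ₗ mul) ∘ₗ LinearMap.rTensor H (rmul k H mul (PiLformula k H mul one eps delta y))
      := by
  set p : H := PiLformula k H mul one eps delta y with hp
  apply TensorProduct.ext'; intro v w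
  -- RHS = ε((vp)w), expand via C1 and δp
  have hc1 := LinearMap.congr_fun hH.weak_counit₁ ((v ⊗ₜ[k] p) ⊗ₜ[k] w)
  simp only [LinearMap.comp_apply, LinearMap.rTensor_tmul, LinearMap.lTensor_tmul,
    LinearEquiv.coe_coe] at hc1
  have hdel : delta p = (mul.rTensor H) ((TensorProduct.assoc k H H H).symm
      (p ⊗ₜ[k] delta one)) := DeltaFL k H mul one eps delta lam hH y
  rw [hdel] at hc1
  have hgen : ∀ t : H ⊗[k] H,
      (TensorProduct.lid k k) ((TensorProduct.map (eps ∘ₗ mul) (eps ∘ₗ mul))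
        (regroup k H ((v ⊗ₜ[k] ((mul.rTensor H) ((TensorProduct.assoc k H H H).symm
            (p ⊗ₜ[k] t)))) ⊗ₜ[k] w)))
      = eps (mul (v ⊗ₜ[k] (mul (p ⊗ₜ[k] FQgen k H mul eps t w)))) := by
    intro t
    induction t using TensorProduct.induction_on with
    | zero => simp [FQgen]
    | tmul c e =>
      simp only [LinearEquiv.coe_coe, TensorProduct.assoc_symm_tmul, LinearMap.rTensor_tmul,
        FQgen_tmul]
      rw [regroup_opaque]
      simp only [TensorProduct.map_tmul, TensorProduct.mk_apply, LinearMap.flip_apply,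
        TensorProduct.lid_tmul, LinearMap.comp_apply, smul_eq_mul, tmul_smul, map_smul]
      ring
    | add s t hs ht =>
      rw [FQgen_add]
      simp only [tmul_add, add_tmul, map_add, LinearMap.add_apply, hs, ht]
  simp only [LinearMap.comp_apply, LinearMap.lTensor_tmul, LinearMap.rTensor_tmul,
    lmul_apply, rmul_apply]
  rw [hc1, hgen (delta one), FQgen_one]


lemma phiPR
    (hH : IsWeakHopfQuasigroup k H mul one eps delta lam)
    (y : H) :
    (eps ∘ₗ mul) ∘ₗ LinearMap.rTensor H
        (lmul k H mul (PiLformula k H mul one eps delta y) ∘ₗ PiRformula k H mul one eps delta)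
      = (eps ∘ₗ mul) ∘ₗ LinearMap.rTensor H (rmul k H mul (PiLformula k H mul one eps delta y))
      := by
  set p : H := PiLformula k H mul one eps delta y with hp
  apply TensorProduct.ext'; intro v w
  have hc2 := LinearMap.congr_fun hH.weak_counit₂ ((v ⊗ₜ[k] p) ⊗ₜ[k] w)
  simp only [LinearMap.comp_apply, LinearMap.rTensor_tmul, LinearMap.lTensor_tmul,
    LinearEquiv.coe_coe] at hc2
  have hdel : delta p = (mul.rTensor H) ((TensorProduct.assoc k H H H).symm
      (p ⊗ₜ[k] delta one)) := DeltaFL k H mul one eps delta lam hH y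
  rw [hdel] at hc2
  have hgen : ∀ t : H ⊗[k] H,
      (TensorProduct.lid k k) ((TensorProduct.map (eps ∘ₗ mul) (eps ∘ₗ mul))
        (regroup k H ((v ⊗ₜ[k] ((TensorProduct.comm k H H)
            ((mul.rTensor H) ((TensorProduct.assoc k H H H).symm (p ⊗ₜ[k] t))))) ⊗ₜ[k] w)))
      = eps (mul (mul (p ⊗ₜ[k] FRgen k H mul eps t v) ⊗ₜ[k] w)) := by
    intro t
    induction t using TensorProduct.induction_on with
    | zero => simp [FRgen]
    | tmul c e =>
      simp only [LinearEquiv.coe_coe, TensorProduct.assoc_symm_tmul, LinearMap.rTensor_tmul,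
        FRgen_tmul, comm_tmul]
      rw [regroup_opaque]
      simp only [TensorProduct.map_tmul, TensorProduct.mk_apply, LinearMap.flip_apply,
        TensorProduct.lid_tmul, LinearMap.comp_apply, smul_eq_mul]
      rw [TensorProduct.tmul_smul, map_smul, ← TensorProduct.smul_tmul', map_smul, map_smul,
        smul_eq_mul]
    | add s t hs ht =>
      have hadd : FRgen k H mul eps (s + t) = FRgen k H mul eps s + FRgen k H mul eps t := by
        apply LinearMap.ext; intro x'; simp [FRgen, tmul_add]
      rw [hadd]
      simp only [tmul_add, add_tmul, map_add, LinearMap.add_apply, hs, ht]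
  simp only [LinearMap.comp_apply, LinearMap.rTensor_tmul, lmul_apply, rmul_apply]
  rw [hc2, hgen (delta one), FRgen_one]


lemma phiC1
    (hH : IsWeakHopfQuasigroup k H mul one eps delta lam)
    (P : H) :
    (eps ∘ₗ mul) ∘ₗ LinearMap.lTensor H (lmul k H mul P)
      = (TensorProduct.lid k k).toLinearMap
          ∘ₗ (TensorProduct.map (eps ∘ₗ mul) (eps ∘ₗ mul))
          ∘ₗ regroup k H
          ∘ₗ (LinearMap.rTensor H ((TensorProduct.mk k H (H ⊗[k] H)).flip (delta P))) := by
  apply TensorProduct.ext'; intro v w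
  have hC0v := LinearMap.congr_fun hH.weak_counit₀ ((v ⊗ₜ[k] P) ⊗ₜ[k] w)
  have hC1v := LinearMap.congr_fun hH.weak_counit₁ ((v ⊗ₜ[k] P) ⊗ₜ[k] w)
  simp only [LinearMap.comp_apply, LinearMap.rTensor_tmul, LinearMap.lTensor_tmul,
    LinearEquiv.coe_coe, assoc_tmul] at hC0v hC1v ⊢
  simp only [lmul_apply, LinearMap.flip_apply, TensorProduct.mk_apply]
  rw [← hC0v, hC1v]

lemma phiC2
    (hH : IsWeakHopfQuasigroup k H mul one eps delta lam)
    (P : H) :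
    (eps ∘ₗ mul) ∘ₗ LinearMap.rTensor H (rmul k H mul P)
      = (TensorProduct.lid k k).toLinearMap
          ∘ₗ (TensorProduct.map (eps ∘ₗ mul) (eps ∘ₗ mul))
          ∘ₗ regroup k H
          ∘ₗ (LinearMap.rTensor H ((TensorProduct.mk k H (H ⊗[k] H)).flip
              ((TensorProduct.comm k H H) (delta P)))) := by
  apply TensorProduct.ext'; intro v w
  have hC2v := LinearMap.congr_fun hH.weak_counit₂ ((v ⊗ₜ[k] P) ⊗ₜ[k] w)
  simp only [LinearMap.comp_apply, LinearMap.rTensor_tmul, LinearMap.lTensor_tmul,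
    LinearEquiv.coe_coe] at hC2v ⊢
  simp only [rmul_apply, LinearMap.flip_apply, TensorProduct.mk_apply]
  rw [hC2v]

lemma conj2
    (hH : IsWeakHopfQuasigroup k H mul one eps delta lam)
    (x y z : H) :
    mul (x ⊗ₜ[k] mul (PiLformula k H mul one eps delta y ⊗ₜ[k] z))
      = mul (mul (x ⊗ₜ[k] PiLformula k H mul one eps delta y) ⊗ₜ[k] z) := by
  set p : H := PiLformula k H mul one eps delta y with hp
  set M₁ : H ⊗[k] H →ₗ[k] H := ctr2 k H (eps ∘ₗ mul) mul
      ∘ₗ (TensorProduct.mk k (H ⊗[k] H) (H ⊗[k] H) (delta x)) with hM₁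
  set Mz : H ⊗[k] H →ₗ[k] H := ctr2 k H (eps ∘ₗ mul) mul
      ∘ₗ ((TensorProduct.mk k (H ⊗[k] H) (H ⊗[k] H)).flip (delta z)) with hMz
  -- ===== chain A =====
  have A0 : mul (x ⊗ₜ[k] mul (p ⊗ₜ[k] z)) = M₁ (delta (mul (p ⊗ₜ[k] z))) := by
    rw [hM₁]
    simp only [LinearMap.comp_apply, TensorProduct.mk_apply]
    exact (exp2 k H mul eps delta hH.delta_mul hH.counit_left x (mul (p ⊗ₜ[k] z))).symm
  have A1 : delta (mul (p ⊗ₜ[k] z)) = (TensorProduct.map mul mul)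
      ((TensorProduct.tensorTensorTensorComm k H H H H) (delta p ⊗ₜ[k] delta z)) := by
    have := LinearMap.congr_fun hH.delta_mul (p ⊗ₜ[k] z)
    simpa using this
  have A2 : ∀ s : H ⊗[k] H,
      M₁ ((TensorProduct.map mul mul)
          ((TensorProduct.tensorTensorTensorComm k H H H H) (s ⊗ₜ[k] delta z)))
        = (M₁ ∘ₗ LinearMap.lTensor H Mz)
            ((TensorProduct.assoc k H H H) ((delta.rTensor H) s)) := by
    intro s
    induction s using TensorProduct.induction_on with
    | zero => simp
    | add s t hs ht => simp only [add_tmul, map_add, hs, ht]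
    | tmul P Q =>
      rw [ttc_tmul_opaque, map_mul_mk]
      simp only [LinearMap.rTensor_tmul]
      rw [assoc_opaque]
      -- RHS rewrite
      have hrhs : (M₁ ∘ₗ LinearMap.lTensor H Mz)
            ((LinearMap.lTensor H ((TensorProduct.mk k H H).flip Q)) (delta P))
          = ctr2 k H ((eps ∘ₗ mul) ∘ₗ LinearMap.lTensor H (LinearMap.id : H →ₗ[k] H))
              (mul ∘ₗ LinearMap.lTensor H (Mz ∘ₗ (TensorProduct.mk k H H).flip Q))
              (delta x ⊗ₜ[k] delta P) := by
        have hstep : (LinearMap.lTensor H Mz)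
              ((LinearMap.lTensor H ((TensorProduct.mk k H H).flip Q)) (delta P))
            = (TensorProduct.map LinearMap.id (Mz ∘ₗ (TensorProduct.mk k H H).flip Q))
                (delta P) := by
          rw [← LinearMap.lTensor_comp_apply, lTensor_map]
        simp only [LinearMap.comp_apply]
        rw [hstep, hM₁]
        simp only [LinearMap.comp_apply, TensorProduct.mk_apply]
        rw [ctr2_map_right]
      rw [hrhs, LinearMap.lTensor_id, LinearMap.comp_id]
      -- LHS rewrite
      have hlhs : M₁ ((TensorProduct.map (lmul k H mul P) (lmul k H mul Q)) (delta z))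
          = ctr2 k H ((eps ∘ₗ mul) ∘ₗ LinearMap.lTensor H (lmul k H mul P))
              (mul ∘ₗ LinearMap.lTensor H (lmul k H mul Q)) (delta x ⊗ₜ[k] delta z) := by
        rw [hM₁]
        simp only [LinearMap.comp_apply, TensorProduct.mk_apply]
        rw [ctr2_map_right]
      rw [hlhs]
      -- φ-rewrite via C0 + C1
      rw [phiC1 k H mul one eps delta lam hH P]
      -- interchange
      have hX : ∀ t s : H ⊗[k] H,
          ctr2 k H ((TensorProduct.lid k k).toLinearMap
              ∘ₗ (TensorProduct.map (eps ∘ₗ mul) (eps ∘ₗ mul))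
              ∘ₗ regroup k H
              ∘ₗ (LinearMap.rTensor H ((TensorProduct.mk k H (H ⊗[k] H)).flip t)))
            (mul ∘ₗ LinearMap.lTensor H (lmul k H mul Q)) (delta x ⊗ₜ[k] s)
          = ctr2 k H (eps ∘ₗ mul)
              (mul ∘ₗ LinearMap.lTensor H
                ((ctr2 k H (eps ∘ₗ mul) mul
                    ∘ₗ ((TensorProduct.mk k (H ⊗[k] H) (H ⊗[k] H)).flip s))
                  ∘ₗ (TensorProduct.mk k H H).flip Q))
              (delta x ⊗ₜ[k] t) := by
        intro t s
        induction t using TensorProduct.induction_on with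
        | zero =>
          have h0 : ((TensorProduct.lid k k).toLinearMap
              ∘ₗ (TensorProduct.map (eps ∘ₗ mul) (eps ∘ₗ mul))
              ∘ₗ regroup k H
              ∘ₗ (LinearMap.rTensor H ((TensorProduct.mk k H (H ⊗[k] H)).flip
                  (0 : H ⊗[k] H)))) = 0 := by
            apply TensorProduct.ext'; intro a b; simp
          rw [h0, ctr2_zero_phi]
          simp
        | add t₁ t₂ h₁ h₂ =>
          have hadd : ((TensorProduct.lid k k).toLinearMap
              ∘ₗ (TensorProduct.map (eps ∘ₗ mul) (eps ∘ₗ mul))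
              ∘ₗ regroup k H
              ∘ₗ (LinearMap.rTensor H ((TensorProduct.mk k H (H ⊗[k] H)).flip (t₁ + t₂))))
            = ((TensorProduct.lid k k).toLinearMap
              ∘ₗ (TensorProduct.map (eps ∘ₗ mul) (eps ∘ₗ mul))
              ∘ₗ regroup k H
              ∘ₗ (LinearMap.rTensor H ((TensorProduct.mk k H (H ⊗[k] H)).flip t₁)))
              + ((TensorProduct.lid k k).toLinearMap
              ∘ₗ (TensorProduct.map (eps ∘ₗ mul) (eps ∘ₗ mul))
              ∘ₗ regroup k H
              ∘ₗ (LinearMap.rTensor H ((TensorProduct.mk k H (H ⊗[k] H)).flip t₂))) := by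
            apply TensorProduct.ext'; intro a b
            simp [tmul_add, add_tmul]
          rw [hadd, ctr2_add_phi, h₁, h₂, TensorProduct.tmul_add, map_add]
        | tmul P₁ P₂ =>
          induction s using TensorProduct.induction_on with
          | zero =>
            have h0 : (mul ∘ₗ LinearMap.lTensor H
                ((ctr2 k H (eps ∘ₗ mul) mul
                    ∘ₗ ((TensorProduct.mk k (H ⊗[k] H) (H ⊗[k] H)).flip (0 : H ⊗[k] H)))
                  ∘ₗ (TensorProduct.mk k H H).flip Q)) = 0 := by
              apply TensorProduct.ext'; intro a b; simp
            rw [h0, ctr2_zero_g]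
            simp
          | add s₁ s₂ h₁ h₂ =>
            have hadd : (mul ∘ₗ LinearMap.lTensor H
                ((ctr2 k H (eps ∘ₗ mul) mul
                    ∘ₗ ((TensorProduct.mk k (H ⊗[k] H) (H ⊗[k] H)).flip (s₁ + s₂)))
                  ∘ₗ (TensorProduct.mk k H H).flip Q))
              = (mul ∘ₗ LinearMap.lTensor H
                ((ctr2 k H (eps ∘ₗ mul) mul
                    ∘ₗ ((TensorProduct.mk k (H ⊗[k] H) (H ⊗[k] H)).flip s₁))
                  ∘ₗ (TensorProduct.mk k H H).flip Q))
                + (mul ∘ₗ LinearMap.lTensor H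
                ((ctr2 k H (eps ∘ₗ mul) mul
                    ∘ₗ ((TensorProduct.mk k (H ⊗[k] H) (H ⊗[k] H)).flip s₂))
                  ∘ₗ (TensorProduct.mk k H H).flip Q)) := by
              apply TensorProduct.ext'; intro a b
              simp [tmul_add]
            rw [hadd, ctr2_add_g, ← h₁, ← h₂, TensorProduct.tmul_add, map_add]
          | tmul z₁ z₂ =>
            rw [ctr2_mkflip, ctr2_mkflip]
            have hφ' : ((TensorProduct.lid k k).toLinearMap
                ∘ₗ (TensorProduct.map (eps ∘ₗ mul) (eps ∘ₗ mul))
                ∘ₗ regroup k H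
                ∘ₗ (LinearMap.rTensor H ((TensorProduct.mk k H (H ⊗[k] H)).flip
                    (P₁ ⊗ₜ[k] P₂)))) ∘ₗ (TensorProduct.mk k H H).flip z₁
              = eps (mul (P₂ ⊗ₜ[k] z₁)) • ((eps ∘ₗ mul) ∘ₗ (TensorProduct.mk k H H).flip P₁)
                := by
              apply LinearMap.ext; intro v
              simp only [LinearMap.comp_apply, LinearMap.flip_apply, TensorProduct.mk_apply,
                LinearMap.rTensor_tmul, LinearMap.smul_apply, LinearEquiv.coe_coe]
              rw [regroup_opaque]
              simp [smul_eq_mul, mul_comm]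
            have hg' : (mul ∘ₗ LinearMap.lTensor H (lmul k H mul Q))
                  ∘ₗ (TensorProduct.mk k H H).flip z₂
                = mul ∘ₗ (TensorProduct.mk k H H).flip (mul (Q ⊗ₜ[k] z₂)) := by
              apply LinearMap.ext; intro u; simp
            have hg'' : (mul ∘ₗ LinearMap.lTensor H
                ((ctr2 k H (eps ∘ₗ mul) mul
                    ∘ₗ ((TensorProduct.mk k (H ⊗[k] H) (H ⊗[k] H)).flip (z₁ ⊗ₜ[k] z₂)))
                  ∘ₗ (TensorProduct.mk k H H).flip Q))
                  ∘ₗ (TensorProduct.mk k H H).flip P₂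
                = eps (mul (P₂ ⊗ₜ[k] z₁)) •
                    (mul ∘ₗ (TensorProduct.mk k H H).flip (mul (Q ⊗ₜ[k] z₂))) := by
              apply LinearMap.ext; intro u
              simp only [LinearMap.comp_apply, LinearMap.flip_apply, TensorProduct.mk_apply,
                LinearMap.lTensor_tmul, ctr2_tmul, LinearMap.smul_apply]
              rw [TensorProduct.tmul_smul, map_smul]
            rw [hφ', hg', hg'', ctr_smul_phi, ctr_smul_g]
      exact hX (delta P) (delta z)
  have A3 : (TensorProduct.assoc k H H H) ((delta.rTensor H) (delta p))
      = (LinearMap.lTensor H delta) (delta p) := by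
    have h := LinearMap.congr_fun hH.coassoc p
    simpa using h
  have A4 : ∀ s : H ⊗[k] H,
      (M₁ ∘ₗ LinearMap.lTensor H Mz) ((LinearMap.lTensor H delta) s)
        = M₁ ((LinearMap.lTensor H (rmul k H mul z)) s) := by
    intro s
    induction s using TensorProduct.induction_on with
    | zero => simp
    | add s t hs ht => simp only [map_add, hs, ht]
    | tmul P Q =>
      simp only [LinearMap.comp_apply, LinearMap.lTensor_tmul]
      congr 1
      congr 1
      rw [hMz]
      simp only [LinearMap.comp_apply, LinearMap.flip_apply, TensorProduct.mk_apply,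
        rmul_apply]
      exact exp2 k H mul eps delta hH.delta_mul hH.counit_left Q z
  have chainA : mul (x ⊗ₜ[k] mul (p ⊗ₜ[k] z))
      = M₁ ((LinearMap.lTensor H (rmul k H mul z)) (delta p)) := by
    rw [A0, A1, A2, A3, A4]
  -- ===== L-steps : chain A continued =====
  have L2 : ∀ t : H ⊗[k] H,
      (LinearMap.lTensor H (rmul k H mul z))
          ((mul.rTensor H) ((TensorProduct.assoc k H H H).symm (p ⊗ₜ[k] t)))
        = (LinearMap.rTensor H (lmul k H mul p))
            ((LinearMap.lTensor H (rmul k H mul z)) t) := by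
    intro t
    induction t using TensorProduct.induction_on with
    | zero => simp
    | tmul c e => simp
    | add s t hs ht => simp only [tmul_add, map_add, hs, ht]
  have L3 : (LinearMap.lTensor H (rmul k H mul z)) (delta one)
      = (LinearMap.rTensor H (FQ k H mul one eps delta)) (delta z) := by
    rw [← lTensor_rmul, W3 k H mul one eps delta hH.coassoc hH.weak_unit₁ hH.delta_mul
      hH.counit_left hH.weak_counit₀ hH.one_mul z]
  have chainA2 : mul (x ⊗ₜ[k] mul (p ⊗ₜ[k] z))
      = ctr2 k H ((eps ∘ₗ mul) ∘ₗ LinearMap.lTensor H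
            (lmul k H mul p ∘ₗ FQ k H mul one eps delta)) mul
          (delta x ⊗ₜ[k] delta z) := by
    rw [chainA, DeltaFL k H mul one eps delta lam hH y, ← hp, L2, L3,
      ← LinearMap.rTensor_comp_apply, rTensor_map, hM₁]
    simp only [LinearMap.comp_apply, TensorProduct.mk_apply]
    rw [ctr2_map_right]
    congr 1
    apply LinearMap.ext; intro u
    induction u using TensorProduct.induction_on with
    | zero => simp
    | tmul a b => simp
    | add u v hu hv => simp only [map_add, hu, hv]
  -- ===== EPIVOT via phiPL =====
  have EPIV : mul (x ⊗ₜ[k] mul (p ⊗ₜ[k] z))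
      = ctr2 k H ((eps ∘ₗ mul) ∘ₗ LinearMap.rTensor H (rmul k H mul p)) mul
          (delta x ⊗ₜ[k] delta z) := by
    rw [chainA2, hp, phiPL k H mul one eps delta lam hH y]
  -- ===== chain B =====
  have B0 : mul (mul (x ⊗ₜ[k] p) ⊗ₜ[k] z) = Mz (delta (mul (x ⊗ₜ[k] p))) := by
    rw [hMz]
    simp only [LinearMap.comp_apply, LinearMap.flip_apply, TensorProduct.mk_apply]
    exact (exp2 k H mul eps delta hH.delta_mul hH.counit_left (mul (x ⊗ₜ[k] p)) z).symm
  have B1 : delta (mul (x ⊗ₜ[k] p)) = (TensorProduct.map mul mul)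
      ((TensorProduct.tensorTensorTensorComm k H H H H) (delta x ⊗ₜ[k] delta p)) := by
    have := LinearMap.congr_fun hH.delta_mul (x ⊗ₜ[k] p)
    simpa using this
  have B2 : ∀ s : H ⊗[k] H,
      Mz ((TensorProduct.map mul mul)
          ((TensorProduct.tensorTensorTensorComm k H H H H) (delta x ⊗ₜ[k] s)))
        = (Mz ∘ₗ LinearMap.lTensor H M₁)
            ((TensorProduct.assoc k H H H) ((delta.rTensor H) s)) := by
    intro s
    induction s using TensorProduct.induction_on with
    | zero => simp
    | add s t hs ht => simp only [tmul_add, map_add, hs, ht]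
    | tmul P Q =>
      rw [ttc_opaque_tmul, map_mul_mkflip]
      simp only [LinearMap.rTensor_tmul]
      rw [assoc_opaque]
      have hstep : (LinearMap.lTensor H M₁)
            ((LinearMap.lTensor H ((TensorProduct.mk k H H).flip Q)) (delta P))
          = (TensorProduct.map LinearMap.id (M₁ ∘ₗ (TensorProduct.mk k H H).flip Q))
              (delta P) := by
        rw [← LinearMap.lTensor_comp_apply, lTensor_map]
      have hrhs : (Mz ∘ₗ LinearMap.lTensor H M₁)
            ((LinearMap.lTensor H ((TensorProduct.mk k H H).flip Q)) (delta P))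
          = ctr2 k H ((eps ∘ₗ mul) ∘ₗ LinearMap.rTensor H (LinearMap.id : H →ₗ[k] H))
              (mul ∘ₗ LinearMap.rTensor H (M₁ ∘ₗ (TensorProduct.mk k H H).flip Q))
              (delta P ⊗ₜ[k] delta z) := by
        simp only [LinearMap.comp_apply]
        rw [hstep, hMz]
        simp only [LinearMap.comp_apply, LinearMap.flip_apply, TensorProduct.mk_apply]
        rw [ctr2_map_left]
      rw [hrhs, LinearMap.rTensor_id, LinearMap.comp_id]
      have hlhs : Mz ((TensorProduct.map (rmul k H mul P) (rmul k H mul Q)) (delta x))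
          = ctr2 k H ((eps ∘ₗ mul) ∘ₗ LinearMap.rTensor H (rmul k H mul P))
              (mul ∘ₗ LinearMap.rTensor H (rmul k H mul Q)) (delta x ⊗ₜ[k] delta z) := by
        rw [hMz]
        simp only [LinearMap.comp_apply, LinearMap.flip_apply, TensorProduct.mk_apply]
        rw [ctr2_map_left]
      rw [hlhs]
      rw [phiC2 k H mul one eps delta lam hH P]
      have hX' : ∀ t u : H ⊗[k] H,
          ctr2 k H ((TensorProduct.lid k k).toLinearMap
              ∘ₗ (TensorProduct.map (eps ∘ₗ mul) (eps ∘ₗ mul))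
              ∘ₗ regroup k H
              ∘ₗ (LinearMap.rTensor H ((TensorProduct.mk k H (H ⊗[k] H)).flip
                  ((TensorProduct.comm k H H) t))))
            (mul ∘ₗ LinearMap.rTensor H (rmul k H mul Q)) (u ⊗ₜ[k] delta z)
          = ctr2 k H (eps ∘ₗ mul)
              (mul ∘ₗ LinearMap.rTensor H
                ((ctr2 k H (eps ∘ₗ mul) mul
                    ∘ₗ (TensorProduct.mk k (H ⊗[k] H) (H ⊗[k] H) u))
                  ∘ₗ (TensorProduct.mk k H H).flip Q))
              (t ⊗ₜ[k] delta z) := by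
        intro t u
        induction t using TensorProduct.induction_on with
        | zero =>
          have h0 : ((TensorProduct.lid k k).toLinearMap
              ∘ₗ (TensorProduct.map (eps ∘ₗ mul) (eps ∘ₗ mul))
              ∘ₗ regroup k H
              ∘ₗ (LinearMap.rTensor H ((TensorProduct.mk k H (H ⊗[k] H)).flip
                  ((TensorProduct.comm k H H) (0 : H ⊗[k] H))))) = 0 := by
            apply TensorProduct.ext'; intro a b; simp
          rw [h0, ctr2_zero_phi]
          simp
        | add t₁ t₂ h₁ h₂ =>
          have hadd : ((TensorProduct.lid k k).toLinearMap
              ∘ₗ (TensorProduct.map (eps ∘ₗ mul) (eps ∘ₗ mul))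
              ∘ₗ regroup k H
              ∘ₗ (LinearMap.rTensor H ((TensorProduct.mk k H (H ⊗[k] H)).flip
                  ((TensorProduct.comm k H H) (t₁ + t₂)))))
            = ((TensorProduct.lid k k).toLinearMap
              ∘ₗ (TensorProduct.map (eps ∘ₗ mul) (eps ∘ₗ mul))
              ∘ₗ regroup k H
              ∘ₗ (LinearMap.rTensor H ((TensorProduct.mk k H (H ⊗[k] H)).flip
                  ((TensorProduct.comm k H H) t₁))))
              + ((TensorProduct.lid k k).toLinearMap
              ∘ₗ (TensorProduct.map (eps ∘ₗ mul) (eps ∘ₗ mul))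
              ∘ₗ regroup k H
              ∘ₗ (LinearMap.rTensor H ((TensorProduct.mk k H (H ⊗[k] H)).flip
                  ((TensorProduct.comm k H H) t₂)))) := by
            apply TensorProduct.ext'; intro a b
            simp [tmul_add, add_tmul]
          rw [hadd, ctr2_add_phi, h₁, h₂, TensorProduct.add_tmul, map_add]
        | tmul P₁ P₂ =>
          induction u using TensorProduct.induction_on with
          | zero =>
            have h0 : (mul ∘ₗ LinearMap.rTensor H
                ((ctr2 k H (eps ∘ₗ mul) mul
                    ∘ₗ (TensorProduct.mk k (H ⊗[k] H) (H ⊗[k] H) (0 : H ⊗[k] H)))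
                  ∘ₗ (TensorProduct.mk k H H).flip Q)) = 0 := by
              apply TensorProduct.ext'; intro a b
              simp [TensorProduct.zero_tmul]
            rw [h0, ctr2_zero_g]
            simp
          | add u₁ u₂ h₁ h₂ =>
            have hadd : (mul ∘ₗ LinearMap.rTensor H
                ((ctr2 k H (eps ∘ₗ mul) mul
                    ∘ₗ (TensorProduct.mk k (H ⊗[k] H) (H ⊗[k] H) (u₁ + u₂)))
                  ∘ₗ (TensorProduct.mk k H H).flip Q))
              = (mul ∘ₗ LinearMap.rTensor H
                ((ctr2 k H (eps ∘ₗ mul) mul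
                    ∘ₗ (TensorProduct.mk k (H ⊗[k] H) (H ⊗[k] H) u₁))
                  ∘ₗ (TensorProduct.mk k H H).flip Q))
                + (mul ∘ₗ LinearMap.rTensor H
                ((ctr2 k H (eps ∘ₗ mul) mul
                    ∘ₗ (TensorProduct.mk k (H ⊗[k] H) (H ⊗[k] H) u₂))
                  ∘ₗ (TensorProduct.mk k H H).flip Q)) := by
              apply TensorProduct.ext'; intro a b
              simp [TensorProduct.add_tmul]
            rw [hadd, ctr2_add_g, ← h₁, ← h₂, TensorProduct.add_tmul, map_add]
          | tmul v₁ v₂ =>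
            rw [ctr2_mk', ctr2_mk']
            have hφ' : (((TensorProduct.lid k k).toLinearMap
                ∘ₗ (TensorProduct.map (eps ∘ₗ mul) (eps ∘ₗ mul))
                ∘ₗ regroup k H
                ∘ₗ (LinearMap.rTensor H ((TensorProduct.mk k H (H ⊗[k] H)).flip
                    ((TensorProduct.comm k H H) (P₁ ⊗ₜ[k] P₂)))))
                  ∘ₗ TensorProduct.mk k H H v₁)
              = eps (mul (v₁ ⊗ₜ[k] P₂)) • ((eps ∘ₗ mul) ∘ₗ TensorProduct.mk k H H P₁) := by
              apply LinearMap.ext; intro w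
              simp only [LinearMap.comp_apply, TensorProduct.mk_apply, comm_tmul,
                LinearMap.flip_apply, LinearMap.rTensor_tmul, LinearMap.smul_apply,
                LinearEquiv.coe_coe]
              rw [regroup_opaque]
              simp [smul_eq_mul, mul_comm]
            have hg' : ((mul ∘ₗ LinearMap.rTensor H (rmul k H mul Q))
                  ∘ₗ TensorProduct.mk k H H v₂)
                = mul ∘ₗ TensorProduct.mk k H H (mul (v₂ ⊗ₜ[k] Q)) := by
              apply LinearMap.ext; intro u'; simp
            have hg'' : ((mul ∘ₗ LinearMap.rTensor H
                ((ctr2 k H (eps ∘ₗ mul) mul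
                    ∘ₗ (TensorProduct.mk k (H ⊗[k] H) (H ⊗[k] H) (v₁ ⊗ₜ[k] v₂)))
                  ∘ₗ (TensorProduct.mk k H H).flip Q))
                  ∘ₗ TensorProduct.mk k H H P₂)
                = eps (mul (v₁ ⊗ₜ[k] P₂)) •
                    (mul ∘ₗ TensorProduct.mk k H H (mul (v₂ ⊗ₜ[k] Q))) := by
              apply LinearMap.ext; intro w
              simp only [LinearMap.comp_apply, TensorProduct.mk_apply, LinearMap.flip_apply,
                LinearMap.rTensor_tmul, ctr2_tmul, LinearMap.smul_apply]
              rw [← TensorProduct.smul_tmul', map_smul]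
            rw [hφ', hg', hg'', ctr_smul_phi, ctr_smul_g]
      exact hX' (delta P) (delta x)
  have B4 : ∀ s : H ⊗[k] H,
      (Mz ∘ₗ LinearMap.lTensor H M₁) ((LinearMap.lTensor H delta) s)
        = Mz ((LinearMap.lTensor H (lmul k H mul x)) s) := by
    intro s
    induction s using TensorProduct.induction_on with
    | zero => simp
    | add s t hs ht => simp only [map_add, hs, ht]
    | tmul P Q =>
      simp only [LinearMap.comp_apply, LinearMap.lTensor_tmul]
      congr 1
      congr 1
      rw [hM₁]
      simp only [LinearMap.comp_apply, TensorProduct.mk_apply, lmul_apply]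
      exact exp2 k H mul eps delta hH.delta_mul hH.counit_left x Q
  have chainB : mul (mul (x ⊗ₜ[k] p) ⊗ₜ[k] z)
      = Mz ((LinearMap.lTensor H (lmul k H mul x)) (delta p)) := by
    rw [B0, B1, B2, A3, B4]
  have R2 : ∀ t : H ⊗[k] H,
      (LinearMap.lTensor H (lmul k H mul x))
          ((mul.rTensor H) ((TensorProduct.assoc k H H H).symm (p ⊗ₜ[k] t)))
        = (LinearMap.rTensor H (lmul k H mul p))
            ((LinearMap.lTensor H (lmul k H mul x)) t) := by
    intro t
    induction t using TensorProduct.induction_on with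
    | zero => simp
    | tmul c e => simp
    | add s t hs ht => simp only [tmul_add, map_add, hs, ht]
  have chainB2 : mul (mul (x ⊗ₜ[k] p) ⊗ₜ[k] z)
      = ctr2 k H ((eps ∘ₗ mul) ∘ₗ LinearMap.rTensor H
            (lmul k H mul p ∘ₗ PiRformula k H mul one eps delta)) mul
          (delta x ⊗ₜ[k] delta z) := by
    rw [chainB, DeltaFL k H mul one eps delta lam hH y, ← hp, R2,
      W2 k H mul one eps delta hH.coassoc hH.weak_unit₂ hH.delta_mul hH.counit_left
        hH.weak_counit₀ hH.mul_one x,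
      ← LinearMap.rTensor_comp_apply, rTensor_map, hMz]
    simp only [LinearMap.comp_apply, LinearMap.flip_apply, TensorProduct.mk_apply]
    rw [ctr2_map_left, LinearMap.rTensor_id, LinearMap.comp_id, rTensor_map]
  rw [EPIV, chainB2, hp, phiPR k H mul one eps delta lam hH y]

/-- In any weak Hopf quasigroup, the target morphism `Π = Π_L` satisfies the three
mixed associativity-type identities
`μ∘((μ∘(Π⊗id))⊗id) = μ∘(Π⊗μ)`, `μ∘(id⊗(μ∘(Π⊗id))) = μ∘((μ∘(id⊗Π))⊗id)` and
`μ∘(id⊗(μ∘(id⊗Π))) = μ∘(μ⊗Π)`. -/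
theorem piL_mixed_associativity
    (hH : IsWeakHopfQuasigroup k H mul one eps delta lam) :
    (mul ∘ₗ ((mul ∘ₗ (PiL k H mul delta lam).rTensor H).rTensor H)
        = mul ∘ₗ (TensorProduct.map (PiL k H mul delta lam) mul)
            ∘ₗ (TensorProduct.assoc k H H H).toLinearMap) ∧
    (mul ∘ₗ (TensorProduct.map (LinearMap.id : H →ₗ[k] H)
          (mul ∘ₗ (PiL k H mul delta lam).rTensor H))
        ∘ₗ (TensorProduct.assoc k H H H).toLinearMap
      = mul ∘ₗ ((mul ∘ₗ (PiL k H mul delta lam).lTensor H).rTensor H)) ∧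
    (mul ∘ₗ (TensorProduct.map (LinearMap.id : H →ₗ[k] H)
          (mul ∘ₗ (PiL k H mul delta lam).lTensor H))
        ∘ₗ (TensorProduct.assoc k H H H).toLinearMap
      = mul ∘ₗ (TensorProduct.map mul (PiL k H mul delta lam))) := by
  rw [hH.piL_eq]
  refine ⟨?_, ?_, ?_⟩
  · apply TensorProduct.ext_threefold; intro x y z
    simp only [LinearMap.comp_apply, LinearMap.rTensor_tmul, TensorProduct.map_tmul,
      LinearEquiv.coe_coe, assoc_tmul, LinearMap.lTensor_tmul, LinearMap.id_apply]
    exact conj1 k H mul one eps delta lam hH x y z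
  · apply TensorProduct.ext_threefold; intro x y z
    simp only [LinearMap.comp_apply, LinearMap.rTensor_tmul, TensorProduct.map_tmul,
      LinearEquiv.coe_coe, assoc_tmul, LinearMap.lTensor_tmul, LinearMap.id_apply]
    exact conj2 k H mul one eps delta lam hH x y z
  · apply TensorProduct.ext_threefold; intro x y z
    simp only [LinearMap.comp_apply, LinearMap.rTensor_tmul, TensorProduct.map_tmul,
      LinearEquiv.coe_coe, assoc_tmul, LinearMap.lTensor_tmul, LinearMap.id_apply]
    exact conj3 k H mul one eps delta lam hH x y z
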